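/- arXiv:math-ph/0311024 — 2 statements merged into one kernel-verified Lean document; each statement's English description precedes it below -/
import Mathlib

section
/- Fix integers 1 ≤ d ≤ d' and a real s ≥ d. Let K ⊆ ℝ^d be compact, let φ : K → ℝ^{d'} be bi-Lipschitz with some constant L ≥ 1, and set A = φ(K); assume H_d(A) > 0. Then there exists a constant C > 0 such that for every N ≥ 2 and every N-point configuration {y_1,…,y_N} ⊆ A attaining the minimal s-energy ℰ_s(A,N), one has min_{i≠j} |y_i − y_j| ≥ C · N^{−1/d} if s > d, and min_{i≠j} |y_i − y_j| ≥ C · (N log N)^{−1/d} if s = d. -/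
open scoped ENNReal NNReal BigOperators Classical
open MeasureTheory Filter Metric Set Topology

/-- The Riesz `s`-energy of a finite configuration `ω`, valued in `[0,∞]`. -/
noncomputable def rieszEnergy {E : Type*} [PseudoEMetricSpace E] (s : ℝ) (ω : Finset E) : ℝ≥0∞ :=
  ∑ x ∈ ω, ∑ y ∈ ω, if x = y then 0 else edist x y ^ (-s)

/-- The `N`-point minimal Riesz `s`-energy over a set `A` (infimum over all `N`-point
subsets of `A`; `∞` if there is none). -/
noncomputable def minRieszEnergy {E : Type*} [PseudoEMetricSpace E] (s : ℝ) (A : Set E)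
    (N : ℕ) : ℝ≥0∞ :=
  ⨅ (ω : Finset E) (_ : ↑ω ⊆ A) (_ : ω.card = N), rieszEnergy s ω

/-- `A ⊆ ℝ^{d'}` is a `d`-rectifiable manifold: a finite union of images of compact subsets
of `ℝ^d` under maps that are bi-Lipschitz on open neighborhoods of those compact sets. -/
def IsRectifiableManifold (d d' : ℕ) (A : Set (EuclideanSpace ℝ (Fin d'))) : Prop :=
  ∃ (n : ℕ) (K : Fin n → Set (EuclideanSpace ℝ (Fin d)))
    (φ : Fin n → EuclideanSpace ℝ (Fin d) → EuclideanSpace ℝ (Fin d')),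
    (∀ k, IsCompact (K k)) ∧
    (∀ k, ∃ (G : Set (EuclideanSpace ℝ (Fin d))) (L : ℝ), IsOpen G ∧ K k ⊆ G ∧ 1 ≤ L ∧
      ∀ x ∈ G, ∀ y ∈ G,
        (1 / L) * dist x y ≤ dist (φ k x) (φ k y) ∧ dist (φ k x) (φ k y) ≤ L * dist x y) ∧
    A = ⋃ k, φ k '' K k

/-- The unit cube `[0,1]^d` in `ℝ^d`. -/
def unitCube (d : ℕ) : Set (EuclideanSpace ℝ (Fin d)) := {x | ∀ i, x i ∈ Set.Icc (0 : ℝ) 1}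

/-- `d`-dimensional Hausdorff measure on `ℝ^{d'}`, normalized so that the unit cube of `ℝ^d`
has measure `1`. -/
noncomputable def normHausdorff (d d' : ℕ) : Measure (EuclideanSpace ℝ (Fin d')) :=
  (μH[(d : ℝ)] (unitCube d))⁻¹ • μH[(d : ℝ)]

/-! ### Auxiliary lemmas on the Riesz energy -/

section RieszHelpers
variable {E : Type*} [EMetricSpace E] {s : ℝ}

lemma rieszEnergy_insert (s : ℝ) (t : Finset E) (p : E) (hp : p ∉ t) :
    rieszEnergy s (insert p t) = rieszEnergy s t + 2 * ∑ w ∈ t, edist p w ^ (-s) := by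
  classical
  unfold rieszEnergy
  rw [Finset.sum_insert hp, Finset.sum_insert hp]
  have h1 : ∀ x ∈ t, (∑ y ∈ insert p t, if x = y then 0 else edist x y ^ (-s))
      = (if x = p then 0 else edist x p ^ (-s))
        + ∑ y ∈ t, if x = y then 0 else edist x y ^ (-s) := by
    intro x hx
    rw [Finset.sum_insert hp]
  rw [Finset.sum_congr rfl h1, Finset.sum_add_distrib]
  have h2 : (∑ x ∈ t, if x = p then 0 else edist x p ^ (-s)) = ∑ w ∈ t, edist p w ^ (-s) := by
    refine Finset.sum_congr rfl fun x hx => ?_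
    rw [if_neg (by rintro rfl; exact hp hx), edist_comm]
  have h3 : (∑ y ∈ t, if p = y then 0 else edist p y ^ (-s)) = ∑ w ∈ t, edist p w ^ (-s) := by
    refine Finset.sum_congr rfl fun y hy => ?_
    rw [if_neg (by rintro rfl; exact hp hy)]
  rw [if_pos rfl, h2, h3]
  ring

lemma rieszEnergy_ne_top (hs : 0 < s) (ω : Finset E) : rieszEnergy s ω ≠ ∞ := by
  unfold rieszEnergy
  apply ENNReal.sum_ne_top.2
  intro x _
  apply ENNReal.sum_ne_top.2
  intro y _
  split_ifs with h
  · exact ENNReal.zero_ne_top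
  · rw [ENNReal.rpow_neg, Ne, ENNReal.inv_eq_top, ENNReal.rpow_eq_zero_iff]
    simp [ENNReal.rpow_eq_zero_iff, (edist_pos.2 h).ne', lt_asymm hs]

lemma pot_le_pot_of_optimal (hs : 0 < s) {A : Set E} {N : ℕ}
    {ω : Finset E} (hωA : ↑ω ⊆ A) (hcard : ω.card = N)
    (hopt : rieszEnergy s ω = minRieszEnergy s A N) {x : E} (hx : x ∈ ω) {z : E} (hz : z ∈ A) :
    ∑ w ∈ ω.erase x, edist x w ^ (-s) ≤ ∑ w ∈ ω.erase x, edist z w ^ (-s) := by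
  classical
  by_cases hzω : z ∈ ω.erase x
  · have : edist z z ^ (-s) ≤ ∑ w ∈ ω.erase x, edist z w ^ (-s) :=
      Finset.single_le_sum (f := fun w => edist z w ^ (-s)) (fun _ _ => zero_le) hzω
    rw [edist_self, ENNReal.zero_rpow_of_neg (neg_neg_iff_pos.2 hs)] at this
    exact le_top.trans this
  · have hxω : x ∉ ω.erase x := Finset.notMem_erase x ω
    have hE : rieszEnergy s ω
        = rieszEnergy s (ω.erase x) + 2 * ∑ w ∈ ω.erase x, edist x w ^ (-s) := by
      conv_lhs => rw [← Finset.insert_erase hx]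
      exact rieszEnergy_insert s _ x hxω
    have hins : rieszEnergy s (insert z (ω.erase x))
        = rieszEnergy s (ω.erase x) + 2 * ∑ w ∈ ω.erase x, edist z w ^ (-s) :=
      rieszEnergy_insert s _ z hzω
    have hle : rieszEnergy s ω ≤ rieszEnergy s (insert z (ω.erase x)) := by
      rw [hopt]
      refine iInf_le_of_le (insert z (ω.erase x)) (iInf_le_of_le ?_ (iInf_le_of_le ?_ le_rfl))
      · intro w hw
        rcases Finset.mem_insert.1 hw with rfl | hw
        · exact hz
        · exact hωA (Finset.mem_of_mem_erase hw)
      · rw [Finset.card_insert_of_notMem hzω, Finset.card_erase_of_mem hx]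
        have h1 : 1 ≤ ω.card := Finset.card_pos.2 ⟨x, hx⟩
        omega
    rw [hE, hins] at hle
    have hF : rieszEnergy s (ω.erase x) ≠ ∞ := rieszEnergy_ne_top hs _
    have := (ENNReal.add_le_add_iff_left hF).1 hle
    exact (ENNReal.mul_le_mul_iff_right (by norm_num) (by norm_num)).1 this

end RieszHelpers

/-! ### Hausdorff measure comparisons in Euclidean space -/

lemma hausdorffMeasure_pi_eq_volume (d : ℕ) :
    (μH[(d:ℝ)] : Measure (Fin d → ℝ)) = volume := by
  have := hausdorffMeasure_pi_real (ι := Fin d)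
  simpa using this

lemma volume_image_le_hausdorff (d : ℕ) (S : Set (EuclideanSpace ℝ (Fin d))) :
    volume ((WithLp.equiv 2 (Fin d → ℝ)) '' S) ≤ μH[(d:ℝ)] S := by
  rw [← hausdorffMeasure_pi_eq_volume d]
  simpa using (PiLp.lipschitzWith_ofLp 2 (fun _ : Fin d => ℝ)).hausdorffMeasure_image_le
    (by positivity : (0:ℝ) ≤ (d:ℝ)) S

lemma exists_kappa (d : ℕ) (hd : 1 ≤ d) : ∃ κ : ℝ≥0∞, 0 < κ ∧ κ ≠ ∞ ∧
    ∀ S : Set (EuclideanSpace ℝ (Fin d)),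
      μH[(d:ℝ)] S ≤ κ * volume ((WithLp.equiv 2 (Fin d → ℝ)) '' S) := by
  set K : ℝ≥0 := (Fintype.card (Fin d) : ℝ≥0) ^ (1 / (2:ℝ≥0∞)).toReal with hK
  refine ⟨(K : ℝ≥0∞) ^ (d:ℝ), ?_, ?_, ?_⟩
  · refine ENNReal.rpow_pos ?_ ENNReal.coe_ne_top
    have h1 : (0:ℝ≥0) < (Fintype.card (Fin d) : ℝ≥0) := by
      simp only [Fintype.card_fin]
      exact_mod_cast Nat.pos_of_ne_zero (by omega)
    have h2 : (0:ℝ≥0) < K := NNReal.rpow_pos h1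
    exact_mod_cast h2
  · exact ENNReal.rpow_ne_top_of_nonneg (by positivity) ENNReal.coe_ne_top
  · intro S
    have hlip : LipschitzWith K (⇑(WithLp.equiv 2 (Fin d → ℝ)).symm) :=
      (PiLp.antilipschitzWith_ofLp 2 (fun _ : Fin d => ℝ)).to_rightInverse
        (WithLp.equiv 2 (Fin d → ℝ)).right_inv
    have h := hlip.hausdorffMeasure_image_le (by positivity : (0:ℝ) ≤ (d:ℝ))
      ((WithLp.equiv 2 (Fin d → ℝ)) '' S)
    rw [Equiv.symm_image_image, hausdorffMeasure_pi_eq_volume d] at h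
    exact h

lemma image_unitCube (d : ℕ) :
    (WithLp.equiv 2 (Fin d → ℝ)) '' unitCube d = Set.pi Set.univ (fun _ : Fin d => Icc (0:ℝ) 1) := by
  rw [Equiv.image_eq_preimage_symm]
  ext y
  simp only [Set.mem_preimage, unitCube, Set.mem_setOf_eq, Set.mem_pi, Set.mem_univ,
    forall_true_left, Set.mem_Icc]
  rfl

lemma one_le_hausdorff_unitCube (d : ℕ) : 1 ≤ μH[(d:ℝ)] (unitCube d) := by
  have h := volume_image_le_hausdorff d (unitCube d)
  rw [image_unitCube] at h
  rw [volume_pi_pi] at h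
  simpa using h

lemma hausdorff_closedBall_le (d : ℕ) (hd : 1 ≤ d) :
    ∃ κ : ℝ≥0∞, 0 < κ ∧ κ ≠ ∞ ∧ ∀ (x₀ : EuclideanSpace ℝ (Fin d)) (ρ : ℝ), 0 ≤ ρ →
      μH[(d:ℝ)] (Metric.closedBall x₀ ρ) ≤ κ * ENNReal.ofReal (2*ρ) ^ (d:ℝ) := by
  obtain ⟨κ, hκ0, hκt, hκ⟩ := exists_kappa d hd
  refine ⟨κ, hκ0, hκt, fun x₀ ρ hρ => ?_⟩
  refine (hκ _).trans ?_
  gcongr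
  have hsub : (WithLp.equiv 2 (Fin d → ℝ)) '' Metric.closedBall x₀ ρ ⊆
      Metric.closedBall ((WithLp.equiv 2 (Fin d → ℝ)) x₀) ρ := by
    rintro _ ⟨y, hy, rfl⟩
    exact Metric.mem_closedBall.2 <| le_trans (by
      simpa using (PiLp.lipschitzWith_ofLp 2 (fun _ : Fin d => ℝ)).dist_le_mul y x₀)
      (Metric.mem_closedBall.1 hy)
  refine (measure_mono hsub).trans ?_
  rw [Real.volume_pi_closedBall _ hρ, ENNReal.ofReal_pow (by linarith), ← ENNReal.rpow_natCast]
  simp [Fintype.card_fin]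

/-! ### Upper regularity of the Hausdorff measure of a bi-Lipschitz image -/

lemma upper_regularity (d d' : ℕ) (hd : 1 ≤ d)
    (K : Set (EuclideanSpace ℝ (Fin d)))
    (φ : EuclideanSpace ℝ (Fin d) → EuclideanSpace ℝ (Fin d')) (L : ℝ) (hL : 1 ≤ L)
    (hbi : ∀ x ∈ K, ∀ y ∈ K,
      (1 / L) * dist x y ≤ dist (φ x) (φ y) ∧ dist (φ x) (φ y) ≤ L * dist x y) :
    ∃ C₀ : ℝ≥0∞, 0 < C₀ ∧ C₀ ≠ ∞ ∧ ∀ (z : EuclideanSpace ℝ (Fin d')) (t : ℝ≥0∞),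
      0 < t → t ≠ ∞ →
      μH[(d:ℝ)] (φ '' K ∩ EMetric.closedBall z t) ≤ C₀ * t ^ (d:ℝ) := by
  obtain ⟨κ, hκ0, hκt, hκball⟩ := hausdorff_closedBall_le d hd
  have hL0 : (0:ℝ) < L := by linarith
  have hL1 : (1:ℝ≥0) ≤ L.toNNReal := by
    rw [← Real.toNNReal_one]
    exact Real.toNNReal_mono hL
  refine ⟨(L.toNNReal : ℝ≥0∞) ^ (d:ℝ) * (κ * ENNReal.ofReal (4*L) ^ (d:ℝ)), ?_, ?_, ?_⟩
  · apply ENNReal.mul_pos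
    · exact (ENNReal.rpow_pos (lt_of_lt_of_le zero_lt_one (by exact_mod_cast hL1))
        ENNReal.coe_ne_top).ne'
    · exact (ENNReal.mul_pos hκ0.ne' (ENNReal.rpow_pos
        (ENNReal.ofReal_pos.2 (by linarith)) ENNReal.ofReal_ne_top).ne').ne'
  · exact ENNReal.mul_ne_top
      (ENNReal.rpow_ne_top_of_nonneg (by positivity) ENNReal.coe_ne_top)
      (ENNReal.mul_ne_top hκt (ENNReal.rpow_ne_top_of_nonneg (by positivity)
        ENNReal.ofReal_ne_top))
  · intro z t ht0 htt
    rcases (φ '' K ∩ EMetric.closedBall z t).eq_empty_or_nonempty with he | ⟨y₀, hy₀⟩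
    · simp [he]
    · obtain ⟨⟨x₀, hx₀K, hφx₀⟩, hy₀B⟩ := hy₀
      have hdistK : ∀ x ∈ K, φ x ∈ EMetric.closedBall z t → dist x x₀ ≤ 2*L*t.toReal := by
        intro x hxK hxB
        have e1 : dist (φ x) z ≤ t.toReal := by
          rw [dist_edist]
          exact ENNReal.toReal_mono htt (EMetric.mem_closedBall.1 hxB)
        have e2 : dist (φ x₀) z ≤ t.toReal := by
          rw [dist_edist]
          refine ENNReal.toReal_mono htt ?_
          rw [hφx₀]
          exact EMetric.mem_closedBall.1 hy₀B
        have h1 : dist (φ x) (φ x₀) ≤ 2 * t.toReal := by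
          calc dist (φ x) (φ x₀) ≤ dist (φ x) z + dist (φ x₀) z := dist_triangle_right _ _ _
            _ ≤ 2 * t.toReal := by linarith
        have h2 := (hbi x hxK x₀ hx₀K).1
        have h3 : dist x x₀ ≤ L * dist (φ x) (φ x₀) := by
          have := mul_le_mul_of_nonneg_left h2 hL0.le
          rw [mul_comm L (1/L * dist x x₀), mul_assoc] at this
          field_simp at this
          linarith [this]
        calc dist x x₀ ≤ L * dist (φ x) (φ x₀) := h3
          _ ≤ L * (2 * t.toReal) := mul_le_mul_of_nonneg_left h1 hL0.le
          _ = 2*L*t.toReal := by ring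
      have hsub : φ '' K ∩ EMetric.closedBall z t ⊆
          φ '' (K ∩ Metric.closedBall x₀ (2*L*t.toReal)) := by
        rintro y ⟨⟨x, hxK, rfl⟩, hyB⟩
        exact ⟨x, ⟨hxK, Metric.mem_closedBall.2 (hdistK x hxK hyB)⟩, rfl⟩
      have hlip : LipschitzOnWith L.toNNReal φ (K ∩ Metric.closedBall x₀ (2*L*t.toReal)) := by
        refine lipschitzOnWith_iff_dist_le_mul.2 fun x hx y hy => ?_
        have := (hbi x hx.1 y hy.1).2
        rwa [Real.coe_toNNReal _ hL0.le]
      have htReal : (0:ℝ) ≤ 2*L*t.toReal := by positivity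
      calc μH[(d:ℝ)] (φ '' K ∩ EMetric.closedBall z t)
          ≤ μH[(d:ℝ)] (φ '' (K ∩ Metric.closedBall x₀ (2*L*t.toReal))) := measure_mono hsub
        _ ≤ (L.toNNReal : ℝ≥0∞) ^ (d:ℝ) * μH[(d:ℝ)] (K ∩ Metric.closedBall x₀ (2*L*t.toReal)) :=
            hlip.hausdorffMeasure_image_le (by positivity)
        _ ≤ (L.toNNReal : ℝ≥0∞) ^ (d:ℝ) * μH[(d:ℝ)] (Metric.closedBall x₀ (2*L*t.toReal)) :=
            mul_le_mul_right (measure_mono Set.inter_subset_right) _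
        _ ≤ (L.toNNReal : ℝ≥0∞) ^ (d:ℝ) * (κ * ENNReal.ofReal (2*(2*L*t.toReal)) ^ (d:ℝ)) := by
            gcongr
            exact hκball x₀ _ htReal
        _ = (L.toNNReal : ℝ≥0∞) ^ (d:ℝ) * (κ * ENNReal.ofReal (4*L) ^ (d:ℝ)) * t ^ (d:ℝ) := by
            have : ENNReal.ofReal (2*(2*L*t.toReal)) = ENNReal.ofReal (4*L) * t := by
              rw [show 2*(2*L*t.toReal) = (4*L)*t.toReal by ring,
                ENNReal.ofReal_mul (by positivity), ENNReal.ofReal_toReal htt]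
            rw [this, ENNReal.mul_rpow_of_nonneg _ _ (by positivity : (0:ℝ) ≤ (d:ℝ))]
            ring

/-! ### Integral estimates -/

section IntegralHelpers
variable {X : Type*} [EMetricSpace X] [MeasurableSpace X] [OpensMeasurableSpace X]

lemma rpow_neg_antitone {x y : ℝ≥0∞} {s : ℝ} (hs : 0 ≤ s) (h : x ≤ y) :
    y ^ (-s) ≤ x ^ (-s) := by
  rw [ENNReal.rpow_neg, ENNReal.rpow_neg]
  exact ENNReal.inv_le_inv.2 (ENNReal.rpow_le_rpow h hs)

lemma shell_bound (μ : Measure X) {A : Set X}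
    {C₀ : ℝ≥0∞} {dr : ℝ}
    (reg : ∀ z t, 0 < t → t ≠ ∞ → μ (A ∩ EMetric.closedBall z t) ≤ C₀ * t ^ dr)
    {s : ℝ} (hs : 0 < s) (c : X) {r : ℝ≥0∞} (hr0 : 0 < r) (hrt : r ≠ ∞) (n : ℕ)
    (hD : ∀ z ∈ A, edist z c ≤ 2 ^ n * r) :
    ∫⁻ z in A \ Metric.eball c r, edist z c ^ (-s) ∂μ ≤
      ∑ k ∈ Finset.range (n + 1), (2 ^ k * r) ^ (-s) * (C₀ * (2 ^ (k + 1) * r) ^ dr) := by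
  classical
  set T : ℕ → Set X := fun k =>
    (A ∩ EMetric.closedBall c (2 ^ (k + 1) * r)) \ Metric.eball c (2 ^ k * r) with hT
  have hr2 : ∀ k : ℕ, (0:ℝ≥0∞) < 2 ^ k * r := fun k =>
    ENNReal.mul_pos (by positivity) hr0.ne'
  have hrt2 : ∀ k : ℕ, (2:ℝ≥0∞) ^ k * r ≠ ∞ :=
    fun k => ENNReal.mul_ne_top (by simp) hrt
  have hcover : A \ Metric.eball c r ⊆ ⋃ k : ℕ, T k := by
    intro z hz
    obtain ⟨hzA, hzb⟩ := hz
    have hge : r ≤ edist z c := by simpa [Metric.mem_eball, not_lt] using hzb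
    have h0 : (2:ℝ≥0∞) ^ 0 * r ≤ edist z c := by simpa using hge
    set Kf := Finset.filter (fun k => 2 ^ k * r ≤ edist z c) (Finset.range (n + 1)) with hKf
    have h0K : 0 ∈ Kf := by
      simp only [hKf, Finset.mem_filter, Finset.mem_range]
      exact ⟨by omega, h0⟩
    set k := Kf.max' ⟨0, h0K⟩ with hk
    have hkK : k ∈ Kf := Finset.max'_mem _ _
    have hkn : k < n + 1 := (Finset.mem_filter.1 hkK).1 |> Finset.mem_range.1
    have hkle : 2 ^ k * r ≤ edist z c := (Finset.mem_filter.1 hkK).2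
    have hkup : edist z c ≤ 2 ^ (k + 1) * r := by
      rcases eq_or_lt_of_le (Nat.succ_le_of_lt hkn) with heq | hlt
      · have hkn' : k = n := by omega
        rw [hkn']
        calc edist z c ≤ 2 ^ n * r := hD z hzA
          _ ≤ 2 ^ (n + 1) * r := by
              gcongr
              · exact one_le_two
              · omega
      · by_contra hcon
        push_neg at hcon
        have : k + 1 ∈ Kf := by
          simp only [hKf, Finset.mem_filter, Finset.mem_range]
          exact ⟨hlt, hcon.le⟩
        have := Finset.le_max' Kf (k + 1) this
        omega
    refine Set.mem_iUnion.2 ⟨k, ⟨⟨hzA, ?_⟩, ?_⟩⟩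
    · exact EMetric.mem_closedBall.2 hkup
    · simpa [Metric.mem_eball, not_lt] using hkle
  have hTempty : ∀ k, n + 1 ≤ k → T k = ∅ := by
    intro k hk
    ext z
    simp only [hT, Set.mem_diff, Set.mem_inter_iff, Set.mem_empty_iff_false, iff_false]
    rintro ⟨⟨hzA, -⟩, hzb⟩
    have h1 : 2 ^ k * r ≤ edist z c := by simpa [Metric.mem_eball, not_lt] using hzb
    have h2 : edist z c ≤ 2 ^ n * r := hD z hzA
    have h4 : (2:ℝ≥0∞) ^ k ≤ 2 ^ n := by
      have := h1.trans h2
      exact (ENNReal.mul_le_mul_iff_left hr0.ne' hrt).1 this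
    have h5 : (2:ℝ≥0∞) ^ (n+1) ≤ 2 ^ n := le_trans (pow_le_pow_right₀ one_le_two hk) h4
    rw [pow_succ] at h5
    have h6 : (2:ℝ≥0∞) ^ n ≠ 0 := by positivity
    have h7 : (2:ℝ≥0∞) ^ n ≠ ∞ := by simp
    nth_rewrite 2 [← mul_one ((2:ℝ≥0∞) ^ n)] at h5
    have := (ENNReal.mul_le_mul_iff_right h6 h7).1 h5
    norm_num at this
  calc ∫⁻ z in A \ Metric.eball c r, edist z c ^ (-s) ∂μ
      ≤ ∫⁻ z in ⋃ k : ℕ, T k, edist z c ^ (-s) ∂μ := lintegral_mono_set hcover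
    _ ≤ ∑' k : ℕ, ∫⁻ z in T k, edist z c ^ (-s) ∂μ := lintegral_iUnion_le _ _
    _ = ∑ k ∈ Finset.range (n + 1), ∫⁻ z in T k, edist z c ^ (-s) ∂μ := by
        refine tsum_eq_sum ?_
        intro k hk
        rw [hTempty k (by simpa using hk)]
        simp
    _ ≤ ∑ k ∈ Finset.range (n + 1), (2 ^ k * r) ^ (-s) * (C₀ * (2 ^ (k + 1) * r) ^ dr) := by
        refine Finset.sum_le_sum fun k _ => ?_
        have hpt : ∀ z ∈ T k, edist z c ^ (-s) ≤ (2 ^ k * r) ^ (-s) := by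
          intro z hz
          have : 2 ^ k * r ≤ edist z c := by
            simpa [Metric.mem_eball, not_lt] using hz.2
          exact rpow_neg_antitone hs.le this
        calc ∫⁻ z in T k, edist z c ^ (-s) ∂μ
            ≤ ∫⁻ _ in T k, (2 ^ k * r) ^ (-s) ∂μ := setLIntegral_mono measurable_const hpt
          _ = (2 ^ k * r) ^ (-s) * μ (T k) := setLIntegral_const _ _
          _ ≤ (2 ^ k * r) ^ (-s) * (C₀ * (2 ^ (k + 1) * r) ^ dr) := by
              gcongr
              refine (measure_mono ?_).trans (reg c _ (hr2 (k+1)) (hrt2 (k+1)))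
              exact fun z hz => hz.1

lemma potential_lower (μ : Measure X) {A : Set X} {s : ℝ}
    (t : Finset X) {P : ℝ≥0∞}
    (hpot : ∀ z ∈ A, P ≤ ∑ w ∈ t, edist z w ^ (-s)) (r : ℝ≥0∞) :
    P * μ (A \ ⋃ w ∈ t, Metric.eball w r) ≤
      ∑ w ∈ t, ∫⁻ z in A \ Metric.eball w r, edist z w ^ (-s) ∂μ := by
  classical
  set Ar := A \ ⋃ w ∈ t, Metric.eball w r with hAr
  have hfm : ∀ w : X, Measurable fun z : X => edist z w ^ (-s) := fun w =>
    (ENNReal.continuous_rpow_const.comp (continuous_id.edist continuous_const)).measurable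
  calc P * μ Ar = ∫⁻ _ in Ar, P ∂μ := (setLIntegral_const _ _).symm
    _ ≤ ∫⁻ z in Ar, ∑ w ∈ t, edist z w ^ (-s) ∂μ := by
        refine setLIntegral_mono (Finset.measurable_sum _ fun w _ => hfm w) ?_
        exact fun z hz => hpot z hz.1
    _ = ∑ w ∈ t, ∫⁻ z in Ar, edist z w ^ (-s) ∂μ :=
        lintegral_finset_sum _ fun w _ => hfm w
    _ ≤ ∑ w ∈ t, ∫⁻ z in A \ Metric.eball w r, edist z w ^ (-s) ∂μ := by
        refine Finset.sum_le_sum fun w hw => ?_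
        refine lintegral_mono_set (Set.diff_subset_diff_right ?_)
        exact Set.subset_biUnion_of_mem (u := fun w : X => Metric.eball w r) (Finset.mem_coe.2 hw)

omit [OpensMeasurableSpace X] in
lemma measure_diff_balls_ge (μ : Measure X) {A : Set X} (hmA : μ A ≠ ∞)
    (t : Finset X) (r : ℝ≥0∞) {b : ℝ≥0∞}
    (hb : ∀ w ∈ t, μ (A ∩ Metric.eball w r) ≤ b) (hbt : (t.card : ℝ≥0∞) * b ≤ μ A / 2) :
    μ A / 2 ≤ μ (A \ ⋃ w ∈ t, Metric.eball w r) := by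
  classical
  have h1 : μ A ≤ μ (A \ ⋃ w ∈ t, Metric.eball w r) + μ (A ∩ ⋃ w ∈ t, Metric.eball w r) := by
    refine (measure_mono ?_).trans (measure_union_le _ _)
    intro z hz
    by_cases hzU : z ∈ ⋃ w ∈ t, Metric.eball w r
    · exact Or.inr ⟨hz, hzU⟩
    · exact Or.inl ⟨hz, hzU⟩
  have h2 : μ (A ∩ ⋃ w ∈ t, Metric.eball w r) ≤ μ A / 2 := by
    rw [Set.inter_iUnion₂]
    refine (measure_biUnion_finset_le t _).trans ?_
    refine le_trans (Finset.sum_le_sum fun w hw => hb w hw) ?_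
    simpa [Finset.sum_const, nsmul_eq_mul] using hbt
  have h3 : μ A ≤ μ (A \ ⋃ w ∈ t, Metric.eball w r) + μ A / 2 := h1.trans (by gcongr)
  have := tsub_le_iff_right.2 h3
  rwa [ENNReal.sub_half hmA] at this

end IntegralHelpers

lemma shell_term_eq (dr sr : ℝ) (hdr : 0 ≤ dr) {r C₀ : ℝ≥0∞} (hr0 : r ≠ 0) (hrt : r ≠ ∞)
    (k : ℕ) :
    (2^k * r)^(-sr) * (C₀ * (2^(k+1) * r)^dr)
      = C₀ * (2:ℝ≥0∞)^dr * (((2:ℝ≥0∞)^(dr - sr))^k * r^(dr-sr)) := by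
  have hx0 : (2:ℝ≥0∞)^k * r ≠ 0 := mul_ne_zero (by positivity) hr0
  have hxt : (2:ℝ≥0∞)^k * r ≠ ∞ := ENNReal.mul_ne_top (by simp) hrt
  have step1 : (2:ℝ≥0∞)^(k+1) * r = 2 * (2^k * r) := by ring
  have step2 : ((2:ℝ≥0∞) * (2^k * r))^dr = 2^dr * (2^k*r)^dr :=
    ENNReal.mul_rpow_of_nonneg _ _ hdr
  have step3 : ((2:ℝ≥0∞)^k*r)^(-sr) * (2^k*r)^dr = (2^k*r)^(dr-sr) := by
    rw [← ENNReal.rpow_add _ _ hx0 hxt, neg_add_eq_sub]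
  have step4 : ((2:ℝ≥0∞)^k*r)^(dr-sr) = ((2:ℝ≥0∞)^k)^(dr-sr) * r^(dr-sr) :=
    ENNReal.mul_rpow_of_ne_zero (by positivity) hr0 _
  have step5 : ((2:ℝ≥0∞)^k)^(dr-sr) = ((2:ℝ≥0∞)^(dr - sr))^k := by
    rw [← ENNReal.rpow_natCast 2 k, ← ENNReal.rpow_mul, mul_comm, ENNReal.rpow_mul,
      ENNReal.rpow_natCast]
  calc (2^k * r)^(-sr) * (C₀ * (2^(k+1) * r)^dr)
      = C₀ * 2^dr * ((2^k * r)^(-sr) * (2^k*r)^dr) := by rw [step1, step2]; ring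
    _ = C₀ * 2^dr * (((2:ℝ≥0∞)^(dr - sr))^k * r^(dr-sr)) := by
        rw [step3, step4, step5]

/-- separation of optimal `s`-energy configurations (`s ≥ d`) on a bi-Lipschitz
image `A = φ(K) ⊆ ℝ^{d'}` of a compact set `K ⊆ ℝ^d`, with `H_d(A) > 0`. -/
theorem separation_of_optimal_config_biLipschitz (d d' : ℕ) (hd : 1 ≤ d) (hdd : d ≤ d')
    (s : ℝ) (hs : (d : ℝ) ≤ s)
    (K : Set (EuclideanSpace ℝ (Fin d))) (hK : IsCompact K)
    (φ : EuclideanSpace ℝ (Fin d) → EuclideanSpace ℝ (Fin d')) (L : ℝ) (hL : 1 ≤ L)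
    (hbi : ∀ x ∈ K, ∀ y ∈ K,
      (1 / L) * dist x y ≤ dist (φ x) (φ y) ∧ dist (φ x) (φ y) ≤ L * dist x y)
    (hA0 : 0 < normHausdorff d d' (φ '' K)) :
    ∃ C : ℝ, 0 < C ∧ ∀ N : ℕ, 2 ≤ N →
      ∀ ω : Finset (EuclideanSpace ℝ (Fin d')), ↑ω ⊆ φ '' K → ω.card = N →
        rieszEnergy s ω = minRieszEnergy s (φ '' K) N →
          ∀ x ∈ ω, ∀ y ∈ ω, x ≠ y →
            ((d : ℝ) < s → C * (N : ℝ) ^ (-(1 / (d : ℝ))) ≤ dist x y) ∧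
            (s = (d : ℝ) → C * ((N : ℝ) * Real.log N) ^ (-(1 / (d : ℝ))) ≤ dist x y) := by
  classical
  set A := φ '' K with hAdef
  have hd0 : (0:ℝ) < (d:ℝ) := by exact_mod_cast Nat.pos_of_ne_zero (by omega)
  have hs0 : (0:ℝ) < s := lt_of_lt_of_le hd0 hs
  -- normalizing constant
  set c := μH[(d:ℝ)] (unitCube d) with hcdef
  have hc1 : 1 ≤ c := one_le_hausdorff_unitCube d
  have hc0 : c ≠ 0 := fun h => by rw [h] at hc1; simp at hc1
  obtain ⟨κ, hκ0, hκt, hκS⟩ := exists_kappa d hd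
  have hct : c ≠ ∞ := by
    refine ne_top_of_le_ne_top hκt ?_
    have h := hκS (unitCube d)
    rw [image_unitCube, volume_pi_pi] at h
    simpa using h
  set μ := normHausdorff d d' with hμdef
  have hμ_apply : ∀ S : Set (EuclideanSpace ℝ (Fin d')), μ S = c⁻¹ * μH[(d:ℝ)] S := by
    intro S
    simp [hμdef, normHausdorff, hcdef, Measure.smul_apply, smul_eq_mul]
  obtain ⟨C₁, hC₁0, hC₁t, reg₁⟩ := upper_regularity d d' hd K φ L hL hbi
  set C₀ := c⁻¹ * C₁ with hC₀def
  have hC₀0 : C₀ ≠ 0 := mul_ne_zero (ENNReal.inv_ne_zero.2 hct) hC₁0.ne'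
  have hC₀t : C₀ ≠ ∞ := ENNReal.mul_ne_top (ENNReal.inv_ne_top.2 hc0) hC₁t
  have reg : ∀ (z : EuclideanSpace ℝ (Fin d')) (t : ℝ≥0∞), 0 < t → t ≠ ∞ →
      μ (A ∩ EMetric.closedBall z t) ≤ C₀ * t ^ (d:ℝ) := by
    intro z t ht0 htt
    rw [hμ_apply, hC₀def, mul_assoc]
    exact mul_le_mul_right (reg₁ z t ht0 htt) _
  -- A is compact, nonempty, of positive finite measure
  have hL0 : (0:ℝ) < L := by linarith
  have hφcont : ContinuousOn φ K := by
    have hlip : LipschitzOnWith L.toNNReal φ K := by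
      refine lipschitzOnWith_iff_dist_le_mul.2 fun x hx y hy => ?_
      have := (hbi x hx y hy).2
      rwa [Real.coe_toNNReal _ hL0.le]
    exact hlip.continuousOn
  have hAcomp : IsCompact A := hK.image_of_continuousOn hφcont
  set m := μ A with hmdef
  have hm0 : m ≠ 0 := hA0.ne'
  have hAne : A.Nonempty := nonempty_of_measure_ne_zero hm0
  obtain ⟨z₀, hz₀⟩ := hAne
  set D := EMetric.diam A with hDdef
  have hDt : D ≠ ∞ := hAcomp.isBounded.ediam_ne_top
  have hD1t : D + 1 ≠ ∞ := by simp [hDt]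
  have hmt : m ≠ ∞ := by
    have hsub : A ⊆ A ∩ EMetric.closedBall z₀ (D + 1) := fun z hz =>
      ⟨hz, EMetric.mem_closedBall.2 ((EMetric.edist_le_diam_of_mem hz hz₀).trans le_self_add)⟩
    have h := (measure_mono hsub).trans (reg z₀ (D+1) (lt_of_lt_of_le zero_lt_one le_add_self) hD1t)
    exact ne_top_of_le_ne_top (ENNReal.mul_ne_top hC₀t
      (ENNReal.rpow_ne_top_of_nonneg (by positivity) hD1t)) h
  have hm2_0 : m / 2 ≠ 0 := by
    simp only [ne_eq, ENNReal.div_eq_zero_iff, not_or]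
    exact ⟨hm0, by norm_num⟩
  have hm2_t : m / 2 ≠ ∞ := (ENNReal.div_lt_top hmt (by norm_num)).ne
  -- key constants
  set b := m / (4 * C₀) with hbdef
  have hb0 : b ≠ 0 := by
    simp only [hbdef, ne_eq, ENNReal.div_eq_zero_iff, not_or]
    exact ⟨hm0, ENNReal.mul_ne_top (by norm_num) hC₀t⟩
  have hbt : b ≠ ∞ := (ENNReal.div_lt_top hmt (mul_ne_zero (by norm_num) hC₀0)).ne
  set a := b ^ (1/(d:ℝ)) with hadef
  have ha0 : a ≠ 0 := by
    simp only [hadef, ne_eq, ENNReal.rpow_eq_zero_iff, not_or, not_and_or]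
    exact ⟨Or.inl hb0, Or.inl hbt⟩
  have hat : a ≠ ∞ := by
    simp only [hadef, ne_eq, ENNReal.rpow_eq_top_iff, not_or, not_and_or]
    exact ⟨Or.inl hb0, Or.inl hbt⟩
  -- radius
  set r : ℕ → ℝ≥0∞ := fun N => a * (N:ℝ≥0∞) ^ (-(1/(d:ℝ))) with hrdef
  have hNfacts : ∀ N : ℕ, 2 ≤ N → ((N:ℝ≥0∞) ≠ 0 ∧ (N:ℝ≥0∞) ≠ ∞ ∧ (1:ℝ≥0∞) ≤ N) := by
    intro N hN
    refine ⟨by exact_mod_cast (by omega : N ≠ 0), ENNReal.natCast_ne_top N, by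
      exact_mod_cast (by omega : 1 ≤ N)⟩
  have hr0 : ∀ N : ℕ, 2 ≤ N → r N ≠ 0 := by
    intro N hN
    obtain ⟨h1, h2, -⟩ := hNfacts N hN
    refine mul_ne_zero ha0 ?_
    simp only [ne_eq, ENNReal.rpow_eq_zero_iff, not_or, not_and_or]
    exact ⟨Or.inl h1, Or.inl h2⟩
  have hrt : ∀ N : ℕ, 2 ≤ N → r N ≠ ∞ := by
    intro N hN
    obtain ⟨h1, h2, -⟩ := hNfacts N hN
    refine ENNReal.mul_ne_top hat ?_
    simp only [ne_eq, ENNReal.rpow_eq_top_iff, not_or, not_and_or]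
    exact ⟨Or.inl h1, Or.inl h2⟩
  have hrd : ∀ N : ℕ, 2 ≤ N → C₀ * (r N) ^ (d:ℝ) = m * 4⁻¹ * (N:ℝ≥0∞)⁻¹ := by
    intro N hN
    obtain ⟨hN0, hNt, -⟩ := hNfacts N hN
    have h1 : (r N) ^ (d:ℝ) = b * (N:ℝ≥0∞)⁻¹ := by
      rw [hrdef]
      rw [ENNReal.mul_rpow_of_ne_zero ha0 (by
        simp only [ne_eq, ENNReal.rpow_eq_zero_iff, not_or, not_and_or]
        exact ⟨Or.inl hN0, Or.inl hNt⟩)]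
      congr 1
      · rw [hadef, ← ENNReal.rpow_mul]
        rw [show (1/(d:ℝ)) * (d:ℝ) = 1 by field_simp]
        exact ENNReal.rpow_one b
      · rw [← ENNReal.rpow_mul]
        rw [show (-(1/(d:ℝ))) * (d:ℝ) = -1 by field_simp]
        exact ENNReal.rpow_neg_one _
    rw [h1, hbdef]
    rw [ENNReal.div_eq_inv_mul, ENNReal.mul_inv (Or.inl (by norm_num)) (Or.inl (by norm_num))]
    calc C₀ * ((4:ℝ≥0∞)⁻¹ * C₀⁻¹ * m * (N:ℝ≥0∞)⁻¹)
        = (C₀ * C₀⁻¹) * (m * 4⁻¹ * (N:ℝ≥0∞)⁻¹) := by ring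
      _ = m * 4⁻¹ * (N:ℝ≥0∞)⁻¹ := by rw [ENNReal.mul_inv_cancel hC₀0 hC₀t, one_mul]
  have hrlow : ∀ N : ℕ, 2 ≤ N → a * (N:ℝ≥0∞)⁻¹ ≤ r N := by
    intro N hN
    obtain ⟨hN0, hNt, hN1⟩ := hNfacts N hN
    refine mul_le_mul_right ?_ a
    rw [← ENNReal.rpow_neg_one]
    refine ENNReal.rpow_le_rpow_of_exponent_le hN1 ?_
    have : (1:ℝ)/(d:ℝ) ≤ 1 := by
      rw [div_le_one hd0]
      exact_mod_cast hd
    linarith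
  -- number of dyadic shells
  obtain ⟨M, hM⟩ := ENNReal.exists_nat_gt (ENNReal.div_lt_top hD1t ha0).ne
  have hM2 : (D+1)/a < 2^M := by
    refine hM.trans_le ?_
    have := Nat.lt_two_pow_self (n := M)
    exact_mod_cast this.le
  set n : ℕ → ℕ := fun N => M + (Nat.log 2 N + 1) with hndef
  have hDn : ∀ N : ℕ, 2 ≤ N → ∀ z ∈ A, ∀ w ∈ A, edist z w ≤ 2^(n N) * r N := by
    intro N hN z hz w hw
    obtain ⟨hN0, hNt, hN1⟩ := hNfacts N hN
    have hlogN : (N:ℝ≥0∞) ≤ 2^(Nat.log 2 N + 1) := by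
      have := Nat.lt_pow_succ_log_self (by norm_num : 1 < 2) N
      exact_mod_cast this.le
    calc edist z w ≤ D := EMetric.edist_le_diam_of_mem hz hw
      _ ≤ D + 1 := le_self_add
      _ = ((D+1)/a * a) * ((N:ℝ≥0∞) * (N:ℝ≥0∞)⁻¹) := by
          rw [ENNReal.div_mul_cancel ha0 hat, ENNReal.mul_inv_cancel hN0 hNt, mul_one]
      _ = ((D+1)/a * (N:ℝ≥0∞)) * (a * (N:ℝ≥0∞)⁻¹) := by ring
      _ ≤ (2^M * 2^(Nat.log 2 N + 1)) * r N := by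
          exact mul_le_mul' (mul_le_mul' hM2.le hlogN) (hrlow N hN)
      _ = 2^(n N) * r N := by simp only [hndef, pow_add, pow_one]
  -- the shell sum
  set S : ℕ → ℝ≥0∞ := fun N => ∑ k ∈ Finset.range (n N + 1),
    ((2:ℝ≥0∞)^k * r N)^(-s) * (C₀ * ((2:ℝ≥0∞)^(k+1) * r N)^(d:ℝ)) with hSdef
  have hSeq : ∀ N : ℕ, 2 ≤ N → S N = C₀ * (2:ℝ≥0∞)^(d:ℝ) *
      ((∑ k ∈ Finset.range (n N + 1), ((2:ℝ≥0∞)^((d:ℝ) - s))^k) * (r N)^((d:ℝ) - s)) := by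
    intro N hN
    simp only [hSdef]
    rw [Finset.sum_congr rfl fun k _ =>
      shell_term_eq (d:ℝ) s (by positivity) (hr0 N hN) (hrt N hN) k]
    rw [← Finset.mul_sum, ← Finset.sum_mul]
  -- the core estimate from optimality
  have core : ∀ N : ℕ, 2 ≤ N → ∀ ω : Finset (EuclideanSpace ℝ (Fin d')), ↑ω ⊆ A →
      ω.card = N → rieszEnergy s ω = minRieszEnergy s A N →
      ∀ x ∈ ω, ∀ y ∈ ω, x ≠ y →
      edist x y ^ (-s) * (m/2) ≤ (N:ℝ≥0∞) * S N := by
    intro N hN ω hωA hcard hopt x hx y hy hxy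
    obtain ⟨hN0, hNt, hN1⟩ := hNfacts N hN
    set t := ω.erase x with htdef
    have hyt : y ∈ t := Finset.mem_erase.2 ⟨hxy.symm, hy⟩
    have htA : ↑t ⊆ A := fun w hw => hωA (Finset.erase_subset x ω hw)
    have hpot : ∀ z ∈ A, edist x y ^ (-s) ≤ ∑ w ∈ t, edist z w ^ (-s) := by
      intro z hz
      refine le_trans ?_ (le_of_le_of_eq (pot_le_pot_of_optimal hs0 hωA hcard hopt hx hz) (by convert rfl))
      exact Finset.single_le_sum (f := fun w => edist x w ^ (-s)) (fun _ _ => zero_le) (by convert hyt)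
    have hball : ∀ w ∈ t, μ (A ∩ Metric.eball w (r N)) ≤ C₀ * (r N)^(d:ℝ) := by
      intro w hw
      have hsub2 : A ∩ Metric.eball w (r N) ⊆ A ∩ EMetric.closedBall w (r N) :=
        Set.inter_subset_inter_right _ EMetric.ball_subset_closedBall
      exact (measure_mono hsub2).trans (reg w _ (pos_iff_ne_zero.2 (hr0 N hN)) (hrt N hN))
    have hcardb : (t.card : ℝ≥0∞) * (C₀ * (r N)^(d:ℝ)) ≤ m/2 := by
      rw [hrd N hN]
      have hcardle : (t.card : ℝ≥0∞) ≤ (N:ℝ≥0∞) := by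
        have : t.card ≤ N := by
          rw [htdef, Finset.card_erase_of_mem hx, hcard]
          omega
        exact_mod_cast this
      calc (t.card : ℝ≥0∞) * (m * 4⁻¹ * (N:ℝ≥0∞)⁻¹)
          ≤ (N:ℝ≥0∞) * (m * 4⁻¹ * (N:ℝ≥0∞)⁻¹) := mul_le_mul_left hcardle _
        _ = m * 4⁻¹ * ((N:ℝ≥0∞) * (N:ℝ≥0∞)⁻¹) := by ring
        _ = m * 4⁻¹ := by rw [ENNReal.mul_inv_cancel hN0 hNt, mul_one]
        _ ≤ m * 2⁻¹ := mul_le_mul_right (ENNReal.inv_le_inv.2 (by norm_num)) m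
        _ = m / 2 := by rw [ENNReal.div_eq_inv_mul]; ring
    have hAr : m/2 ≤ μ (A \ ⋃ w ∈ t, Metric.eball w (r N)) :=
      measure_diff_balls_ge μ hmt t (r N) hball hcardb
    calc edist x y ^ (-s) * (m/2)
        ≤ edist x y ^ (-s) * μ (A \ ⋃ w ∈ t, Metric.eball w (r N)) := mul_le_mul_right hAr _
      _ ≤ ∑ w ∈ t, ∫⁻ z in A \ Metric.eball w (r N), edist z w ^ (-s) ∂μ :=
          potential_lower μ t hpot (r N)
      _ ≤ ∑ _w ∈ t, S N := by
          refine Finset.sum_le_sum fun w hw => ?_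
          exact shell_bound μ reg hs0 w (pos_iff_ne_zero.2 (hr0 N hN)) (hrt N hN) (n N)
            (fun z hz => hDn N hN z hz w (htA hw))
      _ = (t.card : ℝ≥0∞) * S N := by rw [Finset.sum_const, nsmul_eq_mul]
      _ ≤ (N:ℝ≥0∞) * S N := by
          refine mul_le_mul_left ?_ _
          have : t.card ≤ N := by
            rw [htdef, Finset.card_erase_of_mem hx, hcard]
            omega
          exact_mod_cast this
  -- split on s = d or s > d
  rcases hs.eq_or_lt with hsd | hds
  · -- case s = d
    subst hsd
    -- logarithmic bound on the number of shells
    have hlog2 : (0:ℝ) < Real.log 2 := Real.log_pos one_lt_two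
    set c₃ : ℝ≥0∞ := ENNReal.ofReal ((M + 3 : ℝ)/Real.log 2) with hc₃def
    have hc₃0 : c₃ ≠ 0 := by
      rw [hc₃def, ne_eq, ENNReal.ofReal_eq_zero, not_le]
      positivity
    have hc₃t : c₃ ≠ ∞ := ENNReal.ofReal_ne_top
    have hnlog : ∀ N : ℕ, 2 ≤ N →
        ((n N + 1 : ℕ) : ℝ≥0∞) ≤ c₃ * ENNReal.ofReal (Real.log N) := by
      intro N hN
      have hN1R : (1:ℝ) < N := by exact_mod_cast (by omega : 1 < N)
      have hlogN : Real.log 2 ≤ Real.log N :=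
        Real.log_le_log (by norm_num) (by exact_mod_cast hN)
      have hq1 : 1 ≤ Real.log N / Real.log 2 := (one_le_div hlog2).2 hlogN
      have hnatlog : (Nat.log 2 N : ℝ) ≤ Real.log N / Real.log 2 := by
        have h1 : (2:ℕ)^(Nat.log 2 N) ≤ N := Nat.pow_log_le_self 2 (by omega)
        have h2 : Real.log ((2:ℝ)^(Nat.log 2 N)) ≤ Real.log N :=
          Real.log_le_log (by positivity) (by exact_mod_cast h1)
        rw [Real.log_pow] at h2
        rw [le_div_iff₀ hlog2]
        exact h2
      have hreal : ((n N + 1 : ℕ) : ℝ) ≤ ((M + 3 : ℝ)/Real.log 2) * Real.log N := by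
        have hcast : ((n N + 1 : ℕ) : ℝ) = (M:ℝ) + (Nat.log 2 N : ℝ) + 2 := by
          rw [hndef]
          push_cast
          ring
        rw [hcast]
        have h3 : (M:ℝ) + 2 ≤ ((M:ℝ) + 2) * (Real.log N / Real.log 2) := by
          nlinarith [hq1]
        have h4 : ((M:ℝ) + 3) * (Real.log N / Real.log 2)
            = ((M:ℝ) + 2) * (Real.log N / Real.log 2) + Real.log N / Real.log 2 := by ring
        have h5 : ((M + 3 : ℝ)/Real.log 2) * Real.log N
            = ((M:ℝ) + 3) * (Real.log N / Real.log 2) := by ring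
        rw [h5, h4]
        linarith
      calc ((n N + 1 : ℕ) : ℝ≥0∞) = ENNReal.ofReal ((n N + 1 : ℕ) : ℝ) :=
            (ENNReal.ofReal_natCast _).symm
        _ ≤ ENNReal.ofReal (((M + 3 : ℝ)/Real.log 2) * Real.log N) :=
            ENNReal.ofReal_le_ofReal hreal
        _ = c₃ * ENNReal.ofReal (Real.log N) := by
            rw [ENNReal.ofReal_mul (by positivity)]
      -- end hnlog
    set Q := C₀ * (2:ℝ≥0∞)^((d:ℝ)) * c₃ * (m/2)⁻¹ with hQdef
    have hQ0 : Q ≠ 0 := by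
      refine mul_ne_zero (mul_ne_zero (mul_ne_zero hC₀0 ?_) hc₃0) (ENNReal.inv_ne_zero.2 hm2_t)
      exact (ENNReal.rpow_pos (by norm_num) (by norm_num)).ne'
    have hQt : Q ≠ ∞ := by
      refine ENNReal.mul_ne_top (ENNReal.mul_ne_top (ENNReal.mul_ne_top hC₀t ?_) hc₃t)
        (ENNReal.inv_ne_top.2 hm2_0)
      exact ENNReal.rpow_ne_top_of_nonneg (by positivity) (by norm_num)
    have hCe0 : Q ^ (-(1/(d:ℝ))) ≠ 0 := (ENNReal.rpow_pos (pos_iff_ne_zero.2 hQ0) hQt).ne'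
    have hCet : Q ^ (-(1/(d:ℝ))) ≠ ∞ := by
      rw [ENNReal.rpow_neg]
      exact ENNReal.inv_ne_top.2 (ENNReal.rpow_pos (pos_iff_ne_zero.2 hQ0) hQt).ne'
    refine ⟨(Q ^ (-(1/(d:ℝ)))).toReal, ENNReal.toReal_pos hCe0 hCet, ?_⟩
    intro N hN ω hωA hcard hopt x hx y hy hxy
    obtain ⟨hN0, hNt, hN1⟩ := hNfacts N hN
    constructor
    · intro hcon
      exact absurd hcon (lt_irrefl _)
    intro _
    -- main estimate
    have hNlogR : (0:ℝ) < (N:ℝ) * Real.log N := by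
      have : (0:ℝ) < Real.log N := Real.log_pos (by exact_mod_cast (by omega : 1 < N))
      have hNR : (0:ℝ) < (N:ℝ) := by exact_mod_cast (by omega : 0 < N)
      positivity
    set V := ENNReal.ofReal ((N:ℝ) * Real.log N) with hVdef
    have hV0 : V ≠ 0 := by
      rw [hVdef, ne_eq, ENNReal.ofReal_eq_zero, not_le]
      exact hNlogR
    have hVt : V ≠ ∞ := ENNReal.ofReal_ne_top
    have hVeq : V = (N:ℝ≥0∞) * ENNReal.ofReal (Real.log N) := by
      rw [hVdef, ENNReal.ofReal_mul (by positivity), ENNReal.ofReal_natCast]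
    have hkey : edist x y ^ (-(d:ℝ)) ≤ Q * V := by
      have h1 := core N hN ω hωA hcard hopt x hx y hy hxy
      have h2 : S N ≤ C₀ * (2:ℝ≥0∞)^((d:ℝ)) * ((n N + 1 : ℕ) : ℝ≥0∞) := by
        rw [hSeq N hN]
        rw [sub_self, ENNReal.rpow_zero, ENNReal.rpow_zero]
        simp only [one_pow, mul_one, Finset.sum_const, Finset.card_range, nsmul_eq_mul,
          Nat.cast_add, Nat.cast_one]
        norm_num
      have h3 : (N:ℝ≥0∞) * S N ≤ C₀ * (2:ℝ≥0∞)^((d:ℝ)) * c₃ * V := by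
        calc (N:ℝ≥0∞) * S N
            ≤ (N:ℝ≥0∞) * (C₀ * (2:ℝ≥0∞)^((d:ℝ)) * ((n N + 1 : ℕ) : ℝ≥0∞)) :=
              mul_le_mul_right h2 _
          _ ≤ (N:ℝ≥0∞) * (C₀ * (2:ℝ≥0∞)^((d:ℝ)) * (c₃ * ENNReal.ofReal (Real.log N))) :=
              mul_le_mul_right (mul_le_mul_right (hnlog N hN) _) _
          _ = C₀ * (2:ℝ≥0∞)^((d:ℝ)) * c₃ * ((N:ℝ≥0∞) * ENNReal.ofReal (Real.log N)) := by
              ring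
          _ = C₀ * (2:ℝ≥0∞)^((d:ℝ)) * c₃ * V := by rw [hVeq]
      have h4 : edist x y ^ (-(d:ℝ)) * (m/2) ≤ C₀ * (2:ℝ≥0∞)^((d:ℝ)) * c₃ * V :=
        (h1.trans h3)
      calc edist x y ^ (-(d:ℝ))
          = edist x y ^ (-(d:ℝ)) * (m/2) * (m/2)⁻¹ := by
            rw [mul_assoc, ENNReal.mul_inv_cancel hm2_0 hm2_t, mul_one]
        _ ≤ C₀ * (2:ℝ≥0∞)^((d:ℝ)) * c₃ * V * (m/2)⁻¹ := mul_le_mul_left h4 _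
        _ = Q * V := by rw [hQdef]; ring
    -- invert
    have hδ : Q ^ (-(1/(d:ℝ))) * V ^ (-(1/(d:ℝ))) ≤ edist x y := by
      have h1 : (Q * V) ^ (-(1/(d:ℝ))) ≤ (edist x y ^ (-(d:ℝ))) ^ (-(1/(d:ℝ))) :=
        rpow_neg_antitone (by positivity) hkey
      rw [← ENNReal.rpow_mul, show (-(d:ℝ)) * (-(1/(d:ℝ))) = 1 by field_simp,
        ENNReal.rpow_one] at h1
      rw [ENNReal.mul_rpow_of_ne_zero hQ0 hV0] at h1
      exact h1
    have hfin : (Q ^ (-(1/(d:ℝ))) * V ^ (-(1/(d:ℝ)))).toReal ≤ dist x y := by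
      rw [dist_edist]
      exact ENNReal.toReal_mono (edist_ne_top x y) hδ
    rw [ENNReal.toReal_mul] at hfin
    have hVr : (V ^ (-(1/(d:ℝ)))).toReal = ((N:ℝ) * Real.log N) ^ (-(1/(d:ℝ))) := by
      rw [← ENNReal.toReal_rpow, ENNReal.toReal_ofReal hNlogR.le]
    rw [hVr] at hfin
    exact hfin
  · -- case d < s
    set w : ℝ≥0∞ := (2:ℝ≥0∞)^((d:ℝ) - s) with hwdef
    have hw1 : w < 1 := by
      rw [hwdef]
      have h := ENNReal.rpow_lt_rpow_of_exponent_lt (x := (2:ℝ≥0∞)) (by norm_num) (by norm_num)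
        (show (d:ℝ) - s < 0 by linarith)
      simpa using h
    set G := (1 - w)⁻¹ with hGdef
    have hGt : G ≠ ∞ := ENNReal.inv_ne_top.2 (tsub_pos_iff_lt.2 hw1).ne'
    have hG0 : G ≠ 0 := ENNReal.inv_ne_zero.2 (ne_top_of_le_ne_top ENNReal.one_ne_top
      tsub_le_self)
    have haE0 : a ^ ((d:ℝ) - s) ≠ 0 := by
      simp only [ne_eq, ENNReal.rpow_eq_zero_iff, not_or, not_and_or]
      exact ⟨Or.inl ha0, Or.inl hat⟩
    have haEt : a ^ ((d:ℝ) - s) ≠ ∞ := by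
      simp only [ne_eq, ENNReal.rpow_eq_top_iff, not_or, not_and_or]
      exact ⟨Or.inl ha0, Or.inl hat⟩
    set Q := C₀ * (2:ℝ≥0∞)^((d:ℝ)) * G * a ^ ((d:ℝ) - s) * (m/2)⁻¹ with hQdef
    have hQ0 : Q ≠ 0 := by
      refine mul_ne_zero (mul_ne_zero (mul_ne_zero (mul_ne_zero hC₀0 ?_) hG0) haE0)
        (ENNReal.inv_ne_zero.2 hm2_t)
      exact (ENNReal.rpow_pos (by norm_num) (by norm_num)).ne'
    have hQt : Q ≠ ∞ := by
      refine ENNReal.mul_ne_top (ENNReal.mul_ne_top (ENNReal.mul_ne_top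
        (ENNReal.mul_ne_top hC₀t ?_) hGt) haEt) (ENNReal.inv_ne_top.2 hm2_0)
      exact ENNReal.rpow_ne_top_of_nonneg (by positivity) (by norm_num)
    have hCe0 : Q ^ (-(1/s)) ≠ 0 := (ENNReal.rpow_pos (pos_iff_ne_zero.2 hQ0) hQt).ne'
    have hCet : Q ^ (-(1/s)) ≠ ∞ := by
      rw [ENNReal.rpow_neg]
      exact ENNReal.inv_ne_top.2 (ENNReal.rpow_pos (pos_iff_ne_zero.2 hQ0) hQt).ne'
    refine ⟨(Q ^ (-(1/s))).toReal, ENNReal.toReal_pos hCe0 hCet, ?_⟩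
    intro N hN ω hωA hcard hopt x hx y hy hxy
    obtain ⟨hN0, hNt, hN1⟩ := hNfacts N hN
    refine ⟨fun _ => ?_, fun hcon => absurd hcon (by linarith)⟩
    -- main estimate
    have hkey : edist x y ^ (-s) ≤ Q * (N:ℝ≥0∞) ^ (s/(d:ℝ)) := by
      have h1 := core N hN ω hωA hcard hopt x hx y hy hxy
      have hsum : (∑ k ∈ Finset.range (n N + 1), w^k) ≤ G := by
        rw [hGdef]
        exact (ENNReal.sum_le_tsum _).trans (ENNReal.tsum_geometric w).le
      have hrE : (r N) ^ ((d:ℝ) - s) =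
          a ^ ((d:ℝ) - s) * (N:ℝ≥0∞) ^ ((-(1/(d:ℝ))) * ((d:ℝ) - s)) := by
        rw [hrdef]
        rw [ENNReal.mul_rpow_of_ne_zero ha0 (by
          simp only [ne_eq, ENNReal.rpow_eq_zero_iff, not_or, not_and_or]
          exact ⟨Or.inl hN0, Or.inl hNt⟩)]
        rw [← ENNReal.rpow_mul, ← ENNReal.rpow_mul]
      have h2 : S N ≤ C₀ * (2:ℝ≥0∞)^((d:ℝ)) * G * a ^ ((d:ℝ) - s)
          * (N:ℝ≥0∞) ^ ((-(1/(d:ℝ))) * ((d:ℝ) - s)) := by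
        rw [hSeq N hN, hrE]
        calc C₀ * (2:ℝ≥0∞)^((d:ℝ)) * ((∑ k ∈ Finset.range (n N + 1), w^k) *
              (a ^ ((d:ℝ) - s) * (N:ℝ≥0∞) ^ ((-(1/(d:ℝ))) * ((d:ℝ) - s))))
            ≤ C₀ * (2:ℝ≥0∞)^((d:ℝ)) * (G *
              (a ^ ((d:ℝ) - s) * (N:ℝ≥0∞) ^ ((-(1/(d:ℝ))) * ((d:ℝ) - s)))) := by
              gcongr
          _ = C₀ * (2:ℝ≥0∞)^((d:ℝ)) * G * a ^ ((d:ℝ) - s)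
              * (N:ℝ≥0∞) ^ ((-(1/(d:ℝ))) * ((d:ℝ) - s)) := by ring
      have h3 : (N:ℝ≥0∞) * S N ≤ Q * (m/2) * (N:ℝ≥0∞) ^ (s/(d:ℝ)) := by
        calc (N:ℝ≥0∞) * S N
            ≤ (N:ℝ≥0∞) * (C₀ * (2:ℝ≥0∞)^((d:ℝ)) * G * a ^ ((d:ℝ) - s)
              * (N:ℝ≥0∞) ^ ((-(1/(d:ℝ))) * ((d:ℝ) - s))) := mul_le_mul_right h2 _
          _ = C₀ * (2:ℝ≥0∞)^((d:ℝ)) * G * a ^ ((d:ℝ) - s)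
              * ((N:ℝ≥0∞) ^ (1:ℝ) * (N:ℝ≥0∞) ^ ((-(1/(d:ℝ))) * ((d:ℝ) - s))) := by
              rw [ENNReal.rpow_one]
              ring
          _ = C₀ * (2:ℝ≥0∞)^((d:ℝ)) * G * a ^ ((d:ℝ) - s)
              * (N:ℝ≥0∞) ^ (1 + (-(1/(d:ℝ))) * ((d:ℝ) - s)) := by
              rw [ENNReal.rpow_add _ _ hN0 hNt]
          _ = C₀ * (2:ℝ≥0∞)^((d:ℝ)) * G * a ^ ((d:ℝ) - s) * (N:ℝ≥0∞) ^ (s/(d:ℝ)) := by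
              rw [show (1:ℝ) + (-(1/(d:ℝ))) * ((d:ℝ) - s) = s/(d:ℝ) from by field_simp <;> ring]
          _ = Q * (m/2) * (N:ℝ≥0∞) ^ (s/(d:ℝ)) := by
              rw [hQdef]
              rw [mul_assoc (C₀ * (2:ℝ≥0∞)^((d:ℝ)) * G * a ^ ((d:ℝ) - s)) ((m/2)⁻¹) (m/2),
                ENNReal.inv_mul_cancel hm2_0 hm2_t, mul_one]
      have h4 : edist x y ^ (-s) * (m/2) ≤ Q * (m/2) * (N:ℝ≥0∞) ^ (s/(d:ℝ)) := h1.trans h3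
      calc edist x y ^ (-s)
          = edist x y ^ (-s) * (m/2) * (m/2)⁻¹ := by
            rw [mul_assoc, ENNReal.mul_inv_cancel hm2_0 hm2_t, mul_one]
        _ ≤ Q * (m/2) * (N:ℝ≥0∞) ^ (s/(d:ℝ)) * (m/2)⁻¹ := mul_le_mul_left h4 _
        _ = Q * ((m/2) * (m/2)⁻¹) * (N:ℝ≥0∞) ^ (s/(d:ℝ)) := by ring
        _ = Q * (N:ℝ≥0∞) ^ (s/(d:ℝ)) := by
            rw [ENNReal.mul_inv_cancel hm2_0 hm2_t, mul_one]
    -- invert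
    have hNsd0 : (N:ℝ≥0∞) ^ (s/(d:ℝ)) ≠ 0 := by
      simp only [ne_eq, ENNReal.rpow_eq_zero_iff, not_or, not_and_or]
      exact ⟨Or.inl hN0, Or.inl hNt⟩
    have hδ : Q ^ (-(1/s)) * (N:ℝ≥0∞) ^ (-(1/(d:ℝ))) ≤ edist x y := by
      have h1 : (Q * (N:ℝ≥0∞) ^ (s/(d:ℝ))) ^ (-(1/s)) ≤ (edist x y ^ (-s)) ^ (-(1/s)) :=
        rpow_neg_antitone (by positivity) hkey
      rw [← ENNReal.rpow_mul, show (-s) * (-(1/s)) = 1 by field_simp, ENNReal.rpow_one] at h1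
      rw [ENNReal.mul_rpow_of_ne_zero hQ0 hNsd0, ← ENNReal.rpow_mul,
        show (s/(d:ℝ)) * (-(1/s)) = -(1/(d:ℝ)) from by field_simp <;> ring] at h1
      exact h1
    have hfin : (Q ^ (-(1/s)) * (N:ℝ≥0∞) ^ (-(1/(d:ℝ)))).toReal ≤ dist x y := by
      rw [dist_edist]
      exact ENNReal.toReal_mono (edist_ne_top x y) hδ
    rw [ENNReal.toReal_mul] at hfin
    have hNr : (((N:ℝ≥0∞)) ^ (-(1/(d:ℝ)))).toReal = (N:ℝ) ^ (-(1/(d:ℝ))) := by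
      rw [← ENNReal.toReal_rpow, ENNReal.toReal_natCast]
    rw [hNr] at hfin
    exact hfin
end

section
/- Fix integers 1 ≤ d ≤ d' and a real s ≥ d. Let A and B be bounded subsets of ℝ^{d'}, and set g_A = liminf_{N→∞} ℰ_s(A,N)/τ_{s,d}(N) and g_B = liminf_{N→∞} ℰ_s(B,N)/τ_{s,d}(N); assume 0 < g_A < ∞ and 0 < g_B < ∞. Let N_1 < N_2 < ⋯ be a strictly increasing sequence of positive integers and for each k let ω_{N_k} ⊆ A ∪ B be an N_k-point configuration such that E_s(ω_{N_k})/τ_{s,d}(N_k) → (g_A^{−d/s} + g_B^{−d/s})^{−s/d} as k → ∞. Then |ω_{N_k} ∩ A|/N_k → g_B^{d/s}/(g_A^{d/s} + g_B^{d/s}) as k → ∞. -/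
open scoped ENNReal NNReal BigOperators Classical
open MeasureTheory Filter Metric Set Topology

/-- The normalizing sequence `τ_{s,d}(N)`: `N^{1+s/d}` for `s > d` and `N² log N` for `s = d`. -/
noncomputable def tauNorm (s : ℝ) (d : ℕ) (N : ℕ) : ℝ :=
  if s = (d : ℝ) then (N : ℝ) ^ 2 * Real.log N else (N : ℝ) ^ (1 + s / (d : ℝ))

section Aux

lemma rieszEnergy_eq_sum_product {E : Type*} [PseudoEMetricSpace E] (s : ℝ) (ω : Finset E) :
    rieszEnergy s ω = ∑ p ∈ ω ×ˢ ω, (if p.1 = p.2 then 0 else edist p.1 p.2 ^ (-s)) := by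
  rw [rieszEnergy, Finset.sum_product]

lemma rieszEnergy_superadd {E : Type*} [PseudoEMetricSpace E] (s : ℝ) (ω : Finset E)
    (P : E → Prop) [DecidablePred P] :
    rieszEnergy s (ω.filter P) + rieszEnergy s (ω.filter fun x => ¬ P x) ≤ rieszEnergy s ω := by
  classical
  rw [rieszEnergy_eq_sum_product, rieszEnergy_eq_sum_product, rieszEnergy_eq_sum_product]
  have hdisj : Disjoint ((ω.filter P) ×ˢ (ω.filter P))
      ((ω.filter fun x => ¬ P x) ×ˢ (ω.filter fun x => ¬ P x)) := by
    rw [Finset.disjoint_left]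
    rintro ⟨x, y⟩ hx hy
    simp only [Finset.mem_product, Finset.mem_filter] at hx hy
    exact hy.1.2 hx.1.2
  rw [← Finset.sum_union hdisj]
  refine Finset.sum_le_sum_of_subset ?_
  intro z hz
  rcases Finset.mem_union.1 hz with h | h <;>
    · simp only [Finset.mem_product, Finset.mem_filter] at h ⊢
      exact ⟨h.1.1, h.2.1⟩

lemma minRieszEnergy_le {E : Type*} [PseudoEMetricSpace E] (s : ℝ) (A : Set E)
    {ω : Finset E} (h : ↑ω ⊆ A) : minRieszEnergy s A ω.card ≤ rieszEnergy s ω := by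
  exact iInf_le_of_le ω (iInf_le_of_le h (iInf_le_of_le rfl le_rfl))

lemma liminf_comp_le {u : ℕ → ℝ≥0∞} {n : ℕ → ℕ} (hn : Tendsto n atTop atTop) :
    atTop.liminf u ≤ atTop.liminf (u ∘ n) := by
  have h1 : atTop.liminf u ≤ (Filter.map n atTop).liminf u :=
    liminf_le_liminf_of_le hn
  have h2 : (Filter.map n atTop).liminf u = atTop.liminf (u ∘ n) := by
    simp only [Filter.liminf, Filter.map_map]
  rwa [h2] at h1

/-- Two-point Hölder lower bound. -/
lemma min_ineq {x y q : ℝ} (hx : 0 < x) (hy : 0 < y) (hq : 0 < q) {β : ℝ}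
    (hβ0 : 0 ≤ β) (hβ1 : β ≤ 1) :
    (x ^ (-q) + y ^ (-q)) ^ (-(1/q)) ≤ x * β ^ (1 + 1/q) + y * (1-β) ^ (1 + 1/q) := by
  set p : ℝ := 1 + 1/q with hp_def
  have hq' : (0:ℝ) < 1/q := by positivity
  have hp1 : 1 < p := by simp only [hp_def]; linarith
  have hp0 : 0 < p := lt_trans one_pos hp1
  set p' : ℝ := 1 + q with hp'_def
  have hp'0 : 0 < p' := by simp only [hp'_def]; linarith
  have hpq : p.HolderConjugate p' := by
    refine ⟨?_, hp0, hp'0⟩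
    rw [hp_def, hp'_def, inv_one]; field_simp; ring
  set f : Fin 2 → ℝ := ![x ^ (1/p) * β, y ^ (1/p) * (1-β)] with hf
  set g : Fin 2 → ℝ := ![x ^ (-(1/p)), y ^ (-(1/p))] with hg
  have h1β : 0 ≤ 1 - β := by linarith
  have hfnn : ∀ i ∈ (Finset.univ : Finset (Fin 2)), 0 ≤ f i := by
    intro i _; fin_cases i <;> simp [hf] <;> positivity
  have hgnn : ∀ i ∈ (Finset.univ : Finset (Fin 2)), 0 ≤ g i := by
    intro i _; fin_cases i <;> simp [hg] <;> positivity
  have key := Real.inner_le_Lp_mul_Lq_of_nonneg (Finset.univ : Finset (Fin 2)) hpq hfnn hgnn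
  have hxx : x ^ (1/p) * x ^ (-(1/p)) = 1 := by
    rw [← Real.rpow_add hx]; simp
  have hyy : y ^ (1/p) * y ^ (-(1/p)) = 1 := by
    rw [← Real.rpow_add hy]; simp
  have hsum1 : ∑ i : Fin 2, f i * g i = 1 := by
    simp only [hf, hg, Fin.sum_univ_two, Matrix.cons_val_zero, Matrix.cons_val_one,
      Matrix.head_cons]
    calc x ^ (1/p) * β * x ^ (-(1/p)) + y ^ (1/p) * (1-β) * y ^ (-(1/p))
        = (x ^ (1/p) * x ^ (-(1/p))) * β + (y ^ (1/p) * y ^ (-(1/p))) * (1-β) := by ring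
      _ = 1 := by rw [hxx, hyy]; ring
  have hxp : (x ^ (1/p)) ^ p = x := by
    rw [← Real.rpow_mul hx.le, one_div, inv_mul_cancel₀ hp0.ne', Real.rpow_one]
  have hyp : (y ^ (1/p)) ^ p = y := by
    rw [← Real.rpow_mul hy.le, one_div, inv_mul_cancel₀ hp0.ne', Real.rpow_one]
  have hsumf : ∑ i : Fin 2, f i ^ p = x * β ^ p + y * (1-β) ^ p := by
    simp only [hf, Fin.sum_univ_two, Matrix.cons_val_zero, Matrix.cons_val_one, Matrix.head_cons]
    rw [Real.mul_rpow (Real.rpow_nonneg hx.le _) hβ0,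
      Real.mul_rpow (Real.rpow_nonneg hy.le _) h1β, hxp, hyp]
  have hq0 : q ≠ 0 := hq.ne'
  have hq1 : (q:ℝ)+1 ≠ 0 := by positivity
  have hqq : (1:ℝ)+1/q = (q+1)/q := by field_simp
  have hexp : -(1/p) * p' = -q := by
    rw [hp_def, hp'_def, hqq, one_div_div, neg_mul]
    congr 1
    rw [show (1:ℝ)+q = q+1 by ring, div_mul_cancel₀ _ hq1]
  have hsumg : ∑ i : Fin 2, g i ^ p' = x ^ (-q) + y ^ (-q) := by
    simp only [hg, Fin.sum_univ_two, Matrix.cons_val_zero, Matrix.cons_val_one, Matrix.head_cons]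
    rw [← Real.rpow_mul hx.le, ← Real.rpow_mul hy.le, hexp]
  rw [hsum1, hsumf, hsumg] at key
  set F : ℝ := x * β ^ p + y * (1-β) ^ p with hF_def
  set S : ℝ := x ^ (-q) + y ^ (-q) with hS_def
  have hS : 0 < S := by
    have := Real.rpow_pos_of_pos hx (-q)
    have := Real.rpow_pos_of_pos hy (-q)
    simp only [hS_def]; linarith
  have hF : 0 ≤ F := by
    have : (0:ℝ) ≤ β ^ p := Real.rpow_nonneg hβ0 _
    have : (0:ℝ) ≤ (1-β) ^ p := Real.rpow_nonneg h1β _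
    simp only [hF_def]; positivity
  have hSS : S ^ (1/p') * S ^ (-(1/p')) = 1 := by
    rw [← Real.rpow_add hS]; simp
  have step1 : S ^ (-(1/p')) ≤ F ^ (1/p) := by
    have h2 := mul_le_mul_of_nonneg_right key (Real.rpow_nonneg hS.le (-(1/p')))
    rwa [one_mul, mul_assoc, hSS, mul_one] at h2
  have step2 : (S ^ (-(1/p'))) ^ p ≤ (F ^ (1/p)) ^ p :=
    Real.rpow_le_rpow (Real.rpow_nonneg hS.le _) step1 hp0.le
  have hL : (S ^ (-(1/p'))) ^ p = S ^ (-(1/q)) := by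
    rw [← Real.rpow_mul hS.le]
    congr 1
    rw [neg_mul, neg_inj, div_mul_eq_mul_div, one_mul, hp_def, hp'_def,
      div_eq_div_iff (by positivity) hq0]
    field_simp
    ring
  have hR : (F ^ (1/p)) ^ p = F := by
    rw [← Real.rpow_mul hF, one_div, inv_mul_cancel₀ hp0.ne', Real.rpow_one]
  rw [hL, hR] at step2
  exact step2

lemma value_eq {x y q : ℝ} (hx : 0 < x) (hy : 0 < y) (hq : 0 < q) :
    x * (y^q/(x^q+y^q)) ^ (1 + 1/q) + y * (x^q/(x^q+y^q)) ^ (1 + 1/q)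
      = (x ^ (-q) + y ^ (-q)) ^ (-(1/q)) := by
  set p : ℝ := 1 + 1/q with hp_def
  have hq0 : q ≠ 0 := hq.ne'
  have hX : 0 < x ^ q := Real.rpow_pos_of_pos hx q
  have hY : 0 < y ^ q := Real.rpow_pos_of_pos hy q
  set X : ℝ := x ^ q with hX_def
  set Y : ℝ := y ^ q with hY_def
  set T : ℝ := X + Y with hT_def
  have hT : 0 < T := by positivity
  have hqp : q * p = q + 1 := by rw [hp_def]; field_simp
  have hXp : X ^ p = X * x := by
    rw [hX_def, ← Real.rpow_mul hx.le, hqp, Real.rpow_add hx, Real.rpow_one]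
  have hYp : Y ^ p = Y * y := by
    rw [hY_def, ← Real.rpow_mul hy.le, hqp, Real.rpow_add hy, Real.rpow_one]
  have hLHS : x * (Y/T) ^ p + y * (X/T) ^ p = (x * y) * (T ^ (1-p)) := by
    rw [Real.div_rpow hY.le hT.le, Real.div_rpow hX.le hT.le, hXp, hYp,
      Real.rpow_sub hT, Real.rpow_one]
    field_simp
    ring
  rw [hLHS]
  have hS : x ^ (-q) + y ^ (-q) = T / (X * Y) := by
    rw [Real.rpow_neg hx.le, Real.rpow_neg hy.le, ← hX_def, ← hY_def, hT_def]
    field_simp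
    ring
  rw [hS, Real.div_rpow hT.le (by positivity)]
  have hXY : (X * Y) ^ (-(1/q)) = (x*y)⁻¹ := by
    rw [hX_def, hY_def, ← Real.mul_rpow hx.le hy.le, ← Real.rpow_mul (by positivity)]
    rw [show q * -(1/q) = -1 by field_simp]
    exact Real.rpow_neg_one _
  rw [hXY]
  have h1p : 1 - p = -(1/q) := by rw [hp_def]; ring
  rw [h1p, div_inv_eq_mul]
  ring

lemma unique_min {x y q β : ℝ} (hx : 0 < x) (hy : 0 < y) (hq : 0 < q)
    (hβ0 : 0 ≤ β) (hβ1 : β ≤ 1)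
    (hle : x * β ^ (1 + 1/q) + y * (1-β) ^ (1 + 1/q) ≤ (x ^ (-q) + y ^ (-q)) ^ (-(1/q))) :
    β = y^q/(x^q+y^q) := by
  set p : ℝ := 1 + 1/q with hp_def
  have hq' : (0:ℝ) < 1/q := by positivity
  have hp1 : 1 < p := by simp only [hp_def]; linarith
  have hX : 0 < x ^ q := Real.rpow_pos_of_pos hx q
  have hY : 0 < y ^ q := Real.rpow_pos_of_pos hy q
  set α : ℝ := y^q/(x^q+y^q) with hα_def
  have hα0 : 0 < α := by positivity
  have hα1 : α < 1 := by
    rw [hα_def, div_lt_one (by positivity)]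
    linarith
  have h1α : 1 - α = x^q/(x^q+y^q) := by
    rw [hα_def]; field_simp; ring
  have hfα : x * α ^ p + y * (1-α) ^ p = (x ^ (-q) + y ^ (-q)) ^ (-(1/q)) := by
    rw [h1α]; exact value_eq hx hy hq
  by_contra hne
  set γ : ℝ := (β + α)/2 with hγ_def
  have hγ0 : 0 ≤ γ := by positivity
  have hγ1 : γ ≤ 1 := by rw [hγ_def]; linarith
  have hMγ := min_ineq hx hy hq hγ0 hγ1
  have hsc := strictConvexOn_rpow hp1
  have hconv1 : γ ^ p < 2⁻¹ * β ^ p + 2⁻¹ * α ^ p := by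
    have h := hsc.2 (Set.mem_Ici.2 hβ0) (Set.mem_Ici.2 hα0.le) hne
      (by norm_num : (0:ℝ) < 1/2) (by norm_num : (0:ℝ) < 1/2) (by norm_num)
    simp only [smul_eq_mul] at h
    rwa [show (1:ℝ)/2 * β + 1/2 * α = γ by rw [hγ_def]; ring,
      show (1:ℝ)/2 * β ^ p + 1/2 * α ^ p = 2⁻¹ * β ^ p + 2⁻¹ * α ^ p by ring] at h
  have hconv2 : (1-γ) ^ p < 2⁻¹ * (1-β) ^ p + 2⁻¹ * (1-α) ^ p := by
    have hne' : 1 - β ≠ 1 - α := fun h => hne (by linarith)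
    have h := hsc.2 (Set.mem_Ici.2 (by linarith : (0:ℝ) ≤ 1 - β))
      (Set.mem_Ici.2 (by linarith : (0:ℝ) ≤ 1 - α)) hne'
      (by norm_num : (0:ℝ) < 1/2) (by norm_num : (0:ℝ) < 1/2) (by norm_num)
    simp only [smul_eq_mul] at h
    rwa [show (1:ℝ)/2 * (1-β) + 1/2 * (1-α) = 1 - γ by rw [hγ_def]; ring,
      show (1:ℝ)/2 * (1-β) ^ p + 1/2 * (1-α) ^ p = 2⁻¹ * (1-β) ^ p + 2⁻¹ * (1-α) ^ p
        by ring] at h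
  have hstrict : x * γ ^ p + y * (1-γ) ^ p
      < (x * β ^ p + y * (1-β) ^ p)/2 + (x * α ^ p + y * (1-α) ^ p)/2 := by
    nlinarith [mul_lt_mul_of_pos_left hconv1 hx, mul_lt_mul_of_pos_left hconv2 hy]
  have hlt : x * γ ^ p + y * (1-γ) ^ p < (x ^ (-q) + y ^ (-q)) ^ (-(1/q)) := by
    nlinarith [hfα, hle, hstrict]
  exact absurd hMγ (not_le.2 hlt)

lemma tauNorm_pos {s : ℝ} {d : ℕ} {N : ℕ} (hN : 2 ≤ N) : 0 < tauNorm s d N := by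
  have hN1 : (1:ℝ) < (N:ℝ) := by exact_mod_cast hN.trans_lt' one_lt_two
  rw [tauNorm]
  split_ifs
  · have := Real.log_pos hN1
    positivity
  · exact Real.rpow_pos_of_pos (by linarith) _

lemma tau_ratio_tendsto {s : ℝ} {d : ℕ} (hd : 1 ≤ d) (hs : (d:ℝ) ≤ s)
    {n M : ℕ → ℕ} (hM : Tendsto M atTop atTop) (hn : Tendsto n atTop atTop)
    {β : ℝ} (hβpos : 0 < β)
    (hβ : Tendsto (fun k => (n k : ℝ)/(M k : ℝ)) atTop (𝓝 β)) :
    Tendsto (fun k => tauNorm s d (n k) / tauNorm s d (M k)) atTop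
      (𝓝 (β ^ (1 + s/(d:ℝ)))) := by
  have hd0 : (0:ℝ) < (d:ℝ) := by exact_mod_cast hd.trans_lt' zero_lt_one
  by_cases hsd : s = (d:ℝ)
  · -- s = d case : tauNorm N = N^2 log N
    have hβ2 : β ^ (1 + s/(d:ℝ)) = β ^ 2 := by
      rw [hsd, div_self hd0.ne', show (1:ℝ)+1 = ((2:ℕ):ℝ) by norm_num, Real.rpow_natCast]
    rw [hβ2]
    have hlog1 : Tendsto (fun k => Real.log ((n k : ℝ)/(M k : ℝ)) / Real.log (M k) + 1)
        atTop (𝓝 1) := by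
      have h2 : Tendsto (fun k => Real.log ((n k : ℝ)/(M k : ℝ))) atTop (𝓝 (Real.log β)) :=
        ((Real.continuousAt_log hβpos.ne').tendsto).comp hβ
      have h3 : Tendsto (fun k => (Real.log (M k : ℝ))⁻¹) atTop (𝓝 0) :=
        Tendsto.inv_tendsto_atTop (Real.tendsto_log_atTop.comp
          (tendsto_natCast_atTop_atTop.comp hM))
      have h4 := (h2.mul h3).add (tendsto_const_nhds : Tendsto (fun _ : ℕ => (1:ℝ)) atTop (𝓝 1))
      simpa [div_eq_mul_inv] using h4
    have hmain : Tendsto (fun k => ((n k : ℝ)/(M k : ℝ))^2 *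
        (Real.log ((n k : ℝ)/(M k : ℝ)) / Real.log (M k) + 1)) atTop (𝓝 (β^2)) := by
      have := (hβ.pow 2).mul hlog1
      simpa using this
    refine hmain.congr' ?_
    have hev : ∀ᶠ k in atTop, 2 ≤ n k ∧ 2 ≤ M k :=
      (hn.eventually_ge_atTop 2).and (hM.eventually_ge_atTop 2)
    filter_upwards [hev] with k hk
    obtain ⟨hkn, hkM⟩ := hk
    have hn0 : (0:ℝ) < (n k : ℝ) := by exact_mod_cast hkn.trans_lt' zero_lt_two
    have hM0 : (0:ℝ) < (M k : ℝ) := by exact_mod_cast hkM.trans_lt' zero_lt_two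
    have hlogM : 0 < Real.log (M k) :=
      Real.log_pos (by exact_mod_cast hkM.trans_lt' one_lt_two)
    have hlogn : Real.log ((n k : ℝ)) = Real.log ((n k : ℝ)/(M k : ℝ)) + Real.log (M k) := by
      rw [← Real.log_mul (by positivity) hM0.ne', div_mul_cancel₀ _ hM0.ne']
    rw [tauNorm, tauNorm, if_pos hsd, if_pos hsd, hlogn]
    field_simp

  · -- s ≠ d case : tauNorm N = N ^ (1 + s/d)
    have heq : ∀ k, tauNorm s d (n k) / tauNorm s d (M k)
        = ((n k : ℝ)/(M k : ℝ)) ^ (1 + s/(d:ℝ)) := by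
      intro k
      rw [tauNorm, tauNorm, if_neg hsd, if_neg hsd,
        Real.div_rpow (Nat.cast_nonneg _) (Nat.cast_nonneg _)]
    have hcont : Tendsto (fun x : ℝ => x ^ (1 + s/(d:ℝ))) (𝓝 β) (𝓝 (β ^ (1 + s/(d:ℝ)))) :=
      (Real.continuousAt_rpow_const β _ (Or.inl hβpos.ne')).tendsto
    exact (funext heq : _) ▸ (hcont.comp hβ)

lemma ennreal_le_liminf_add {u v : ℕ → ℝ≥0∞} :
    atTop.liminf u + atTop.liminf v ≤ atTop.liminf (fun i => u i + v i) := by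
  rw [liminf_eq_iSup_iInf_of_nat, liminf_eq_iSup_iInf_of_nat, liminf_eq_iSup_iInf_of_nat]
  have hkey : ∀ i j : ℕ, (⨅ l ≥ i, u l) + (⨅ l ≥ j, v l)
      ≤ (⨅ l ≥ max i j, u l) + (⨅ l ≥ max i j, v l) := by
    intro i j
    refine add_le_add ?_ ?_
    · exact le_iInf₂ fun l hl => iInf₂_le l (le_trans (le_max_left _ _) hl)
    · exact le_iInf₂ fun l hl => iInf₂_le l (le_trans (le_max_right _ _) hl)
  rw [ENNReal.iSup_add_iSup fun i j => ⟨max i j, hkey i j⟩]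
  refine iSup_mono fun k => ?_
  refine le_iInf₂ fun l hl => ?_
  exact add_le_add (iInf₂_le l hl) (iInf₂_le l hl)

lemma sub_liminf {s : ℝ} {d : ℕ} (hd : 1 ≤ d) (hs : (d:ℝ) ≤ s) (u : ℕ → ℝ≥0∞)
    {n M : ℕ → ℕ} (hM : Tendsto M atTop atTop)
    {β : ℝ} (hβ0 : 0 ≤ β)
    (hβ : Tendsto (fun k => (n k : ℝ)/(M k : ℝ)) atTop (𝓝 β)) :
    (atTop.liminf fun N => u N / ENNReal.ofReal (tauNorm s d N))
        * ENNReal.ofReal (β ^ (1 + s/(d:ℝ)))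
      ≤ atTop.liminf fun k => u (n k) / ENNReal.ofReal (tauNorm s d (M k)) := by
  have hd0 : (0:ℝ) < (d:ℝ) := by exact_mod_cast hd.trans_lt' zero_lt_one
  have hp0 : 0 < 1 + s/(d:ℝ) := by
    have : 0 < s/(d:ℝ) := div_pos (hd0.trans_le hs) hd0
    linarith
  rcases eq_or_lt_of_le hβ0 with hβz | hβpos
  · rw [← hβz, Real.zero_rpow hp0.ne', ENNReal.ofReal_zero, mul_zero]
    exact bot_le
  -- β > 0 : n → ∞
  have hn : Tendsto n atTop atTop := by
    rw [← tendsto_natCast_atTop_iff (R := ℝ)]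
    have hev : ∀ᶠ k in atTop, β/2 * (M k : ℝ) ≤ (n k : ℝ) := by
      have h1 : ∀ᶠ k in atTop, β/2 < (n k : ℝ)/(M k : ℝ) :=
        hβ.eventually_const_lt (by linarith)
      filter_upwards [h1, hM.eventually_ge_atTop 1] with k hk hk1
      have hM0 : (0:ℝ) < (M k : ℝ) := by exact_mod_cast hk1.trans_lt' zero_lt_one
      rw [lt_div_iff₀ hM0] at hk
      linarith
    exact tendsto_atTop_mono' _ hev
      (Tendsto.const_mul_atTop (by linarith) (tendsto_natCast_atTop_atTop.comp hM))
  set t : ℕ → ℝ≥0∞ := fun N => ENNReal.ofReal (tauNorm s d N) with ht_def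
  have hev_eq : ∀ᶠ k in atTop, u (n k) / t (M k)
      = (u (n k) / t (n k)) * (t (n k) / t (M k)) := by
    filter_upwards [hn.eventually_ge_atTop 2] with k hk
    have htn0 : t (n k) ≠ 0 := by
      simp only [ht_def, ne_eq, ENNReal.ofReal_eq_zero, not_le]
      exact tauNorm_pos hk
    have htnt : t (n k) ≠ ⊤ := ENNReal.ofReal_ne_top
    rw [div_eq_mul_inv, div_eq_mul_inv, div_eq_mul_inv, mul_assoc, ← mul_assoc (t (n k))⁻¹,
      ENNReal.inv_mul_cancel htn0 htnt, one_mul]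
  have hlim2 : Tendsto (fun k => t (n k) / t (M k)) atTop
      (𝓝 (ENNReal.ofReal (β ^ (1 + s/(d:ℝ))))) := by
    have hratio := tau_ratio_tendsto hd hs hM hn hβpos hβ
    have := (ENNReal.continuous_ofReal.tendsto _).comp hratio
    refine this.congr' ?_
    filter_upwards [hM.eventually_ge_atTop 2] with k hk
    simp only [Function.comp_apply, ht_def]
    rw [ENNReal.ofReal_div_of_pos (tauNorm_pos hk)]
  calc (atTop.liminf fun N => u N / t N) * ENNReal.ofReal (β ^ (1 + s/(d:ℝ)))
      ≤ (atTop.liminf fun k => u (n k) / t (n k))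
          * (atTop.liminf fun k => t (n k) / t (M k)) := by
        refine mul_le_mul' ?_ ?_
        · exact liminf_comp_le hn
        · rw [hlim2.liminf_eq]
    _ ≤ atTop.liminf fun k => (u (n k) / t (n k)) * (t (n k) / t (M k)) :=
        ENNReal.le_liminf_mul
    _ = atTop.liminf fun k => u (n k) / t (M k) := (liminf_congr hev_eq).symm

end Aux

/-- if a sequence of configurations on `A ∪ B` attains the optimal combined
energy asymptotics, then the proportion of points in `A` tends to
`g_B^{d/s}/(g_A^{d/s}+g_B^{d/s})`. -/
theorem frac_points_in_A_tendsto (d d' : ℕ) (hd : 1 ≤ d) (hdd : d ≤ d') (s : ℝ)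
    (hs : (d : ℝ) ≤ s)
    (A B : Set (EuclideanSpace ℝ (Fin d')))
    (hA : Bornology.IsBounded A) (hB : Bornology.IsBounded B)
    (gA gB : ℝ≥0∞)
    (hgA : gA = atTop.liminf fun N : ℕ =>
      minRieszEnergy s A N / ENNReal.ofReal (tauNorm s d N))
    (hgB : gB = atTop.liminf fun N : ℕ =>
      minRieszEnergy s B N / ENNReal.ofReal (tauNorm s d N))
    (hgA0 : 0 < gA) (hgAfin : gA < ⊤) (hgB0 : 0 < gB) (hgBfin : gB < ⊤)
    (Nseq : ℕ → ℕ) (hmono : StrictMono Nseq) (hpos : ∀ k, 0 < Nseq k)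
    (ω : ℕ → Finset (EuclideanSpace ℝ (Fin d')))
    (hsub : ∀ k, ↑(ω k) ⊆ A ∪ B) (hcard : ∀ k, (ω k).card = Nseq k)
    (hconv : Tendsto
      (fun k : ℕ => rieszEnergy s (ω k) / ENNReal.ofReal (tauNorm s d (Nseq k)))
      atTop
      (𝓝 ((gA ^ (-(d : ℝ) / s) + gB ^ (-(d : ℝ) / s)) ^ (-(s / (d : ℝ)))))) :
    Tendsto (fun k : ℕ => ((↑(ω k) ∩ A).ncard : ℝ) / (Nseq k : ℝ)) atTop
      (𝓝 (gB.toReal ^ ((d : ℝ) / s) /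
        (gA.toReal ^ ((d : ℝ) / s) + gB.toReal ^ ((d : ℝ) / s)))) := by
  classical
  have hd0 : (0:ℝ) < (d:ℝ) := by exact_mod_cast hd.trans_lt' zero_lt_one
  have hs0 : (0:ℝ) < s := hd0.trans_le hs
  set q : ℝ := (d:ℝ)/s with hq_def
  have hq : 0 < q := div_pos hd0 hs0
  have h1q : 1/q = s/(d:ℝ) := one_div_div _ _
  set x : ℝ := gA.toReal with hx_def
  set y : ℝ := gB.toReal with hy_def
  have hx : 0 < x := ENNReal.toReal_pos hgA0.ne' hgAfin.ne
  have hy : 0 < y := ENNReal.toReal_pos hgB0.ne' hgBfin.ne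
  set αstar : ℝ := y^q/(x^q+y^q) with hαstar_def
  -- the limit value L and its properties
  set L : ℝ≥0∞ := (gA ^ (-(d : ℝ) / s) + gB ^ (-(d : ℝ) / s)) ^ (-(s / (d : ℝ))) with hL_def
  have hexp1 : -(d : ℝ) / s = -q := by rw [hq_def, neg_div]
  have hexp2 : -(s / (d:ℝ)) = -(1/q) := by rw [h1q]
  have hgAq_ne_top : gA ^ (-q) ≠ ⊤ := by
    intro h
    rw [ENNReal.rpow_eq_top_iff] at h
    rcases h with ⟨h1, _⟩ | ⟨h1, _⟩
    exacts [hgA0.ne' h1, hgAfin.ne h1]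
  have hgBq_ne_top : gB ^ (-q) ≠ ⊤ := by
    intro h
    rw [ENNReal.rpow_eq_top_iff] at h
    rcases h with ⟨h1, _⟩ | ⟨h1, _⟩
    exacts [hgB0.ne' h1, hgBfin.ne h1]
  have hgAq_ne_zero : gA ^ (-q) ≠ 0 := by
    intro h
    rw [ENNReal.rpow_eq_zero_iff] at h
    rcases h with ⟨h1, _⟩ | ⟨h1, _⟩
    exacts [hgA0.ne' h1, hgAfin.ne h1]
  have hL_ne_top : L ≠ ⊤ := by
    intro h
    rw [hL_def, hexp1, hexp2, ENNReal.rpow_eq_top_iff] at h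
    rcases h with ⟨h1, _⟩ | ⟨h1, h2⟩
    · exact hgAq_ne_zero (by simpa using (add_eq_zero.1 h1).1)
    · exact (ENNReal.add_ne_top.2 ⟨hgAq_ne_top, hgBq_ne_top⟩) h1
  have hL_toReal : L.toReal = (x ^ (-q) + y ^ (-q)) ^ (-(1/q)) := by
    rw [hL_def, hexp1, hexp2, ← ENNReal.toReal_rpow,
      ENNReal.toReal_add hgAq_ne_top hgBq_ne_top, ← ENNReal.toReal_rpow,
      ← ENNReal.toReal_rpow, ← hx_def, ← hy_def]
  -- counting functions
  set n : ℕ → ℕ := fun k => ((ω k).filter (· ∈ A)).card with hn_def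
  set m : ℕ → ℕ := fun k => ((ω k).filter (fun z => ¬ z ∈ A)).card with hm_def
  have hnm : ∀ k, n k + m k = Nseq k := by
    intro k
    rw [hn_def, hm_def, Finset.card_filter_add_card_filter_not, hcard]
  have hnN : ∀ k, n k ≤ Nseq k := fun k => le_trans (Nat.le_add_right _ _) (hnm k).le
  have hgoal_eq : ∀ k, ((↑(ω k) ∩ A).ncard : ℝ) = (n k : ℝ) := by
    intro k
    have hset : (↑(ω k) : Set _) ∩ A = ↑((ω k).filter (· ∈ A)) := by
      ext z
      simp [Finset.mem_filter]
    rw [hset, Set.ncard_coe_finset]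
  -- energy lower bound
  set t : ℕ → ℝ≥0∞ := fun N => ENNReal.ofReal (tauNorm s d N) with ht_def
  have hEk : ∀ k, minRieszEnergy s A (n k) + minRieszEnergy s B (m k)
      ≤ rieszEnergy s (ω k) := by
    intro k
    have hsubA : ↑((ω k).filter (· ∈ A)) ⊆ A := by
      intro z hz
      simp only [Finset.coe_filter, Set.mem_setOf_eq] at hz
      exact hz.2
    have hsubB : ↑((ω k).filter (fun z => ¬ z ∈ A)) ⊆ B := by
      intro z hz
      simp only [Finset.coe_filter, Set.mem_setOf_eq] at hz
      rcases hsub k hz.1 with h | h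
      · exact absurd h hz.2
      · exact h
    calc minRieszEnergy s A (n k) + minRieszEnergy s B (m k)
        ≤ rieszEnergy s ((ω k).filter (· ∈ A))
          + rieszEnergy s ((ω k).filter (fun z => ¬ z ∈ A)) :=
          add_le_add (minRieszEnergy_le s A hsubA) (minRieszEnergy_le s B hsubB)
      _ ≤ rieszEnergy s (ω k) := rieszEnergy_superadd s (ω k) (· ∈ A)
  -- main subsequence argument
  show Tendsto (fun k : ℕ => ((↑(ω k) ∩ A).ncard : ℝ) / (Nseq k : ℝ)) atTop (𝓝 αstar)
  apply tendsto_of_subseq_tendsto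
  intro ns hns
  have hmem : ∀ j, ((↑(ω (ns j)) ∩ A).ncard : ℝ) / (Nseq (ns j) : ℝ) ∈ Set.Icc (0:ℝ) 1 := by
    intro j
    have hN0 : (0:ℝ) < (Nseq (ns j) : ℝ) := by exact_mod_cast hpos (ns j)
    constructor
    · positivity
    · rw [hgoal_eq, div_le_one hN0]
      exact_mod_cast hnN (ns j)
  obtain ⟨β, hβmem, ms, hms_mono, hms⟩ := isCompact_Icc.tendsto_subseq hmem
  refine ⟨ms, ?_⟩
  have hβ0 : 0 ≤ β := hβmem.1
  have hβ1 : β ≤ 1 := hβmem.2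
  suffices hβα : β = αstar by
    rw [hβα] at hms
    exact hms
  -- the subsequence φ
  set φ : ℕ → ℕ := fun j => ns (ms j) with hφ_def
  have hφ : Tendsto φ atTop atTop := hns.comp hms_mono.tendsto_atTop
  have hM : Tendsto (fun j => Nseq (φ j)) atTop atTop := hmono.tendsto_atTop.comp hφ
  have hβten : Tendsto (fun j => (n (φ j) : ℝ)/(Nseq (φ j) : ℝ)) atTop (𝓝 β) := by
    refine hms.congr fun j => ?_
    simp only [Function.comp_apply, hφ_def, hgoal_eq]
  have hmten : Tendsto (fun j => (m (φ j) : ℝ)/(Nseq (φ j) : ℝ)) atTop (𝓝 (1-β)) := by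
    have h := (tendsto_const_nhds : Tendsto (fun _ : ℕ => (1:ℝ)) atTop (𝓝 1)).sub hβten
    refine h.congr fun j => ?_
    have hN0 : (0:ℝ) < (Nseq (φ j) : ℝ) := by exact_mod_cast hpos (φ j)
    have hj := hnm (φ j)
    have : (m (φ j) : ℝ) = (Nseq (φ j) : ℝ) - (n (φ j) : ℝ) := by
      have := congrArg (fun a : ℕ => (a : ℝ)) hj
      push_cast at this
      linarith
    rw [this]
    field_simp
  -- liminf chain
  have hconvφ : Tendsto (fun j => rieszEnergy s (ω (φ j)) / t (Nseq (φ j))) atTop (𝓝 L) :=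
    hconv.comp hφ
  have hliminf_le_L :
      (atTop.liminf fun j => (minRieszEnergy s A (n (φ j)) + minRieszEnergy s B (m (φ j)))
        / t (Nseq (φ j))) ≤ L := by
    rw [← hconvφ.liminf_eq]
    refine liminf_le_liminf (Eventually.of_forall fun j => ?_)
    exact ENNReal.div_le_div_right (hEk (φ j)) _
  have hsplit :
      (atTop.liminf fun j => minRieszEnergy s A (n (φ j)) / t (Nseq (φ j)))
        + (atTop.liminf fun j => minRieszEnergy s B (m (φ j)) / t (Nseq (φ j)))
      ≤ atTop.liminf fun j => (minRieszEnergy s A (n (φ j)) + minRieszEnergy s B (m (φ j)))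
          / t (Nseq (φ j)) := by
    have h := ennreal_le_liminf_add
      (u := fun j => minRieszEnergy s A (n (φ j)) / t (Nseq (φ j)))
      (v := fun j => minRieszEnergy s B (m (φ j)) / t (Nseq (φ j)))
    refine le_trans h (le_of_eq (liminf_congr (Eventually.of_forall fun j => ?_)))
    rw [ENNReal.add_div]
  have h1 := sub_liminf hd hs (minRieszEnergy s A) (n := fun j => n (φ j))
    (M := fun j => Nseq (φ j)) hM hβ0 hβten
  have h2 := sub_liminf hd hs (minRieszEnergy s B) (n := fun j => m (φ j))
    (M := fun j => Nseq (φ j)) hM (by linarith : (0:ℝ) ≤ 1 - β) hmten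
  rw [← hgA] at h1
  rw [← hgB] at h2
  have hmain : gA * ENNReal.ofReal (β ^ (1 + s/(d:ℝ)))
      + gB * ENNReal.ofReal ((1-β) ^ (1 + s/(d:ℝ))) ≤ L :=
    le_trans (add_le_add h1 h2) (le_trans hsplit hliminf_le_L)
  -- convert to real inequality
  have hne1 : gA * ENNReal.ofReal (β ^ (1 + s/(d:ℝ))) ≠ ⊤ :=
    ENNReal.mul_ne_top hgAfin.ne ENNReal.ofReal_ne_top
  have hne2 : gB * ENNReal.ofReal ((1-β) ^ (1 + s/(d:ℝ))) ≠ ⊤ :=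
    ENNReal.mul_ne_top hgBfin.ne ENNReal.ofReal_ne_top
  have hreal : x * β ^ (1 + s/(d:ℝ)) + y * (1-β) ^ (1 + s/(d:ℝ)) ≤ L.toReal := by
    have h := ENNReal.toReal_mono hL_ne_top hmain
    rwa [ENNReal.toReal_add hne1 hne2, ENNReal.toReal_mul, ENNReal.toReal_mul,
      ENNReal.toReal_ofReal (Real.rpow_nonneg hβ0 _),
      ENNReal.toReal_ofReal (Real.rpow_nonneg (by linarith) _), ← hx_def, ← hy_def] at h
  rw [hL_toReal] at hreal
  have hps : 1 + s/(d:ℝ) = 1 + 1/q := by rw [h1q]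
  rw [hps] at hreal
  exact unique_min hx hy hq hβ0 hβ1 hreal
end
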